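/- arXiv:2603.13465 — 2 statements merged into one kernel-verified Lean document; each statement's English description precedes it below -/
import Mathlib

section
/- Let p = [b_1^{a_1} ⋯ b_r^{a_r}] (with b_1 ≥ ⋯ ≥ b_r) be an orthogonal partition of 2n. Let q be the subpartition of p consisting of all parts b_i with b_i odd and s the subpartition consisting of all parts b_i with b_i even, and write |q| = 2n_1 and |s| = 2n_2, so that n = n_1 + n_2. Then (2n² − n) − dim_D((p^t)_{SO_{2n}}) = (2n_1² − n_1) + (2n_2² − n_2) − dim_D((q^t)_{SO_{2n_1}}) − dim_D((s^t)_{SO_{2n_2}}). (This is the SO_{2n} case of the dimension identity for nilpotent orbits; (p^t)_{SO_{2n}} is the Barbasch–Vogan dual of p.) -/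
namespace JiangWF

/-- `sCount p i` : the number of parts of `p` that are `≥ i`. -/
def sCount (p : Multiset ℕ) (i : ℕ) : ℕ := (p.filter (fun a => i ≤ a)).card

/-- `rCount p i` : the number of parts of `p` equal to `i`. -/
def rCount (p : Multiset ℕ) (i : ℕ) : ℕ := p.count i

/-- The largest part of `p` (`0` for the empty partition). -/
def maxPart (p : Multiset ℕ) : ℕ := p.sup

/-- The smallest part of `p` (`0` for the empty partition). -/
noncomputable def minPart (p : Multiset ℕ) : ℕ := sInf {a : ℕ | a ∈ p}

/-- The transpose partition: its `i`-th part is `sCount p i`, for `1 ≤ i ≤ maxPart p`. -/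
def transpose (p : Multiset ℕ) : Multiset ℕ :=
  (Multiset.range (maxPart p)).map fun i => sCount p (i + 1)

/-- The sum of the `m` largest parts of `p`. -/
def topSum (p : Multiset ℕ) (m : ℕ) : ℕ :=
  ∑ i ∈ Finset.Icc 1 p.sum, min m (sCount p i)

/-- Dominance order: `domLE p q` means `p ≤ q`. -/
def domLE (p q : Multiset ℕ) : Prop := ∀ m, topSum p m ≤ topSum q m

/-- `p` is a partition of `N`: all parts positive, summing to `N`. -/
def IsPartitionOf (p : Multiset ℕ) (N : ℕ) : Prop := (∀ a ∈ p, 0 < a) ∧ p.sum = N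

/-- Symplectic partition: every odd part occurs with even multiplicity. -/
def IsSymplectic (p : Multiset ℕ) : Prop := ∀ a, a % 2 = 1 → Even (p.count a)

/-- Orthogonal partition: every even part occurs with even multiplicity. -/
def IsOrthogonal (p : Multiset ℕ) : Prop := ∀ a, a % 2 = 0 → Even (p.count a)

/-- `p^-`: decrease the smallest part by one (deleting it if it becomes `0`). -/
noncomputable def pMinus (p : Multiset ℕ) : Multiset ℕ :=
  if minPart p ≤ 1 then p.erase (minPart p)
  else (minPart p - 1) ::ₘ p.erase (minPart p)

/-- `p^+`: increase the largest part by one. -/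
def pPlus (p : Multiset ℕ) : Multiset ℕ := (maxPart p + 1) ::ₘ p.erase (maxPart p)

/-- `p^{+-}`: increase the largest part by one and decrease the smallest by one. -/
noncomputable def pPM (p : Multiset ℕ) : Multiset ℕ := pMinus (pPlus p)

/-- `p₁ = [⌊b_1/2⌋^{a_1} ⋯ ⌊b_r/2⌋^{a_r}]^t` (discarding zero entries before transposing). -/
def pOne (p : Multiset ℕ) : Multiset ℕ :=
  transpose ((p.map fun b => b / 2).filter fun x => 0 < x)

/-- `Σ_{i : b_i odd} a_i`: the number of odd parts of `p`. -/
def oddMult (p : Multiset ℕ) : ℕ := (p.filter fun a => a % 2 = 1).card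

/-- `n* = ⌊(Σ_{i : b_i odd} a_i)/2⌋`. -/
def nStar (p : Multiset ℕ) : ℕ := oddMult p / 2

/-- Append an extra part `m` to `q`, omitted if `m = 0`. -/
def addPart (m : ℕ) (q : Multiset ℕ) : Multiset ℕ := if m = 0 then q else m ::ₘ q

/-- `c` is the `Sp`-collapse of `p`: the maximal symplectic partition `≤ p` in dominance. -/
def IsSpCollapse (p c : Multiset ℕ) : Prop :=
  IsPartitionOf c p.sum ∧ IsSymplectic c ∧ domLE c p ∧
    ∀ c', IsPartitionOf c' p.sum → IsSymplectic c' → domLE c' p → domLE c' c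

/-- `c` is the `SO`-collapse of `p`: the maximal orthogonal partition `≤ p` in dominance. -/
def IsSOCollapse (p c : Multiset ℕ) : Prop :=
  IsPartitionOf c p.sum ∧ IsOrthogonal c ∧ domLE c p ∧
    ∀ c', IsPartitionOf c' p.sum → IsOrthogonal c' → domLE c' p → domLE c' c

/-- `e` is the `Sp`-expansion of `p`: the minimal special symplectic partition `≥ p`. -/
def IsSpExpansion (p e : Multiset ℕ) : Prop :=
  IsPartitionOf e p.sum ∧ IsSymplectic e ∧ IsSymplectic (transpose e) ∧ domLE p e ∧
    ∀ e', IsPartitionOf e' p.sum → IsSymplectic e' → IsSymplectic (transpose e') →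
      domLE p e' → domLE e e'

/-- `e` is the `SO_{2n+1}`-expansion of `p`: the minimal special orthogonal partition `≥ p`
(odd case: special means the transpose is orthogonal). -/
def IsSOOddExpansion (p e : Multiset ℕ) : Prop :=
  IsPartitionOf e p.sum ∧ IsOrthogonal e ∧ IsOrthogonal (transpose e) ∧ domLE p e ∧
    ∀ e', IsPartitionOf e' p.sum → IsOrthogonal e' → IsOrthogonal (transpose e') →
      domLE p e' → domLE e e'

/-- `e` is the `SO_{2n}`-expansion of `p`: the minimal special orthogonal partition `≥ p`
(even case: special means the transpose is symplectic). -/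
def IsSOEvenExpansion (p e : Multiset ℕ) : Prop :=
  IsPartitionOf e p.sum ∧ IsOrthogonal e ∧ IsSymplectic (transpose e) ∧ domLE p e ∧
    ∀ e', IsPartitionOf e' p.sum → IsOrthogonal e' → IsSymplectic (transpose e') →
      domLE p e' → domLE e e'

/-- `dim_C(q)` for a symplectic partition `q` of `2k`:
`2k² + k − (1/2)Σ s_i(q)² − (1/2)Σ_{i odd} r_i(q)` (note `2k² + k = (|q|² + |q|)/2`). -/
def dimC (p : Multiset ℕ) : ℚ :=
  ((p.sum : ℚ) ^ 2 + (p.sum : ℚ)) / 2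
    - (∑ i ∈ Finset.Icc 1 p.sum, (sCount p i : ℚ) ^ 2) / 2
    - (∑ i ∈ Finset.Icc 1 p.sum, if i % 2 = 1 then (rCount p i : ℚ) else 0) / 2

/-- `dim_B(q)` for an orthogonal partition `q` of `2k+1`:
`2k² + k − (1/2)Σ s_i(q)² + (1/2)Σ_{i odd} r_i(q)` (note `2k² + k = (|q|² − |q|)/2`). -/
def dimB (p : Multiset ℕ) : ℚ :=
  ((p.sum : ℚ) ^ 2 - (p.sum : ℚ)) / 2
    - (∑ i ∈ Finset.Icc 1 p.sum, (sCount p i : ℚ) ^ 2) / 2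
    + (∑ i ∈ Finset.Icc 1 p.sum, if i % 2 = 1 then (rCount p i : ℚ) else 0) / 2

/-- `dim_D(q)` for an orthogonal partition `q` of `2k`:
`2k² − k − (1/2)Σ s_i(q)² + (1/2)Σ_{i odd} r_i(q)` (note `2k² − k = (|q|² − |q|)/2`). -/
def dimD (p : Multiset ℕ) : ℚ :=
  ((p.sum : ℚ) ^ 2 - (p.sum : ℚ)) / 2
    - (∑ i ∈ Finset.Icc 1 p.sum, (sCount p i : ℚ) ^ 2) / 2
    + (∑ i ∈ Finset.Icc 1 p.sum, if i % 2 = 1 then (rCount p i : ℚ) else 0) / 2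



/-! ### Auxiliary development -/

section JWAux

open Finset

lemma JW_sCount_cons (a : ℕ) (x : Multiset ℕ) (i : ℕ) :
    sCount (a ::ₘ x) i = sCount x i + (if i ≤ a then 1 else 0) := by
  simp only [sCount, Multiset.filter_cons]
  split <;> simp

lemma JW_sCount_zero (i : ℕ) : sCount 0 i = 0 := rfl

lemma JW_sCount_anti (x : Multiset ℕ) : Antitone (sCount x) := by
  intro i j hij
  induction x using Multiset.induction with
  | empty => simp [JW_sCount_zero]
  | cons a x ih =>
    simp only [JW_sCount_cons]
    have : (if j ≤ a then 1 else 0) ≤ (if i ≤ a then 1 else 0) := by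
      split_ifs <;> omega
    omega

lemma JW_sCount_le_card (x : Multiset ℕ) (i : ℕ) : sCount x i ≤ Multiset.card x :=
  Multiset.card_le_card (Multiset.filter_le _ x)

lemma JW_mem_le_sum {x : Multiset ℕ} {a : ℕ} (h : a ∈ x) : a ≤ x.sum :=
  Multiset.single_le_sum (fun _ _ => Nat.zero_le _) _ h

lemma JW_card_le_sum {x : Multiset ℕ} (hx : ∀ a ∈ x, 0 < a) : Multiset.card x ≤ x.sum := by
  induction x using Multiset.induction with
  | empty => simp
  | cons a x ih =>
    simp only [Multiset.card_cons, Multiset.sum_cons]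
    have h1 : 0 < a := hx a (Multiset.mem_cons_self a x)
    have h2 : Multiset.card x ≤ x.sum := ih (fun b hb => hx b (Multiset.mem_cons_of_mem hb))
    omega

lemma JW_sCount_eq_zero {x : Multiset ℕ} {i : ℕ} (h : x.sum < i) : sCount x i = 0 := by
  rw [sCount, Multiset.card_eq_zero, Multiset.filter_eq_nil]
  intro a ha hle
  exact absurd (JW_mem_le_sum ha) (by omega)

lemma JW_sCount_split (x : Multiset ℕ) (i : ℕ) :
    sCount x i = rCount x i + sCount x (i + 1) := by
  induction x using Multiset.induction with
  | empty => simp [JW_sCount_zero, rCount]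
  | cons a x ih =>
    simp only [JW_sCount_cons, rCount, Multiset.count_cons]
    rw [rCount] at ih
    split_ifs <;> omega

lemma JW_sum_sCount_Icc (x : Multiset ℕ) (B : ℕ) (hB : ∀ a ∈ x, a ≤ B) :
    ∑ i ∈ Icc 1 B, sCount x i = x.sum := by
  induction x using Multiset.induction with
  | empty => simp [JW_sCount_zero]
  | cons a x ih =>
    have ha : a ≤ B := hB a (Multiset.mem_cons_self a x)
    have ih' := ih (fun b hb => hB b (Multiset.mem_cons_of_mem hb))
    simp only [JW_sCount_cons, Finset.sum_add_distrib, ih', Multiset.sum_cons]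
    have : ∑ i ∈ Icc 1 B, (if i ≤ a then 1 else 0) = a := by
      rw [Finset.sum_boole]
      have h2 : Finset.filter (fun i => i ≤ a) (Icc 1 B) = Icc 1 a := by
        ext i; simp only [Finset.mem_Icc, Finset.mem_filter]; omega
      rw [h2]
      simp [Nat.card_Icc]
    omega

end JWAux


section JWParity

open Finset

lemma JW_even_exists_double :
    ∀ n (x : Multiset ℕ), Multiset.card x = n → (∀ v, Even (x.count v)) →
      ∃ w, x = w + w := by
  intro n
  induction n using Nat.strong_induction_on with
  | _ n ih =>
    intro x hcard hev
    rcases Multiset.empty_or_exists_mem x with h0 | ⟨a, ha⟩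
    · exact ⟨0, by simp [h0]⟩
    · have h1 : 1 ≤ x.count a := Multiset.one_le_count_iff_mem.mpr ha
      have h2 : 2 ≤ x.count a := by
        rcases hev a with ⟨c, hc⟩; omega
      have ha2 : a ∈ x.erase a := by
        rw [← Multiset.count_pos, Multiset.count_erase_self]; omega
      set y := (x.erase a).erase a with hy
      have hxy : x = a ::ₘ a ::ₘ y := by
        rw [hy, Multiset.cons_erase ha2, Multiset.cons_erase ha]
      have hcy : Multiset.card y = n - 2 := by
        have := congrArg Multiset.card hxy
        simp only [Multiset.card_cons] at this
        omega
      have hn2 : n - 2 < n := by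
        have := congrArg Multiset.card hxy
        simp only [Multiset.card_cons] at this
        omega
      have hevy : ∀ v, Even (y.count v) := by
        intro v
        have hxc : x.count v = y.count v + (if v = a then 2 else 0) := by
          rw [hxy]; simp only [Multiset.count_cons]; split_ifs <;> omega
        rcases hev v with ⟨c, hc⟩
        by_cases hva : v = a
        · rw [if_pos hva] at hxc; exact ⟨c - 1, by omega⟩
        · rw [if_neg hva] at hxc; exact ⟨c, by omega⟩
      obtain ⟨w, hw⟩ := ih (n - 2) hn2 y hcy hevy
      refine ⟨a ::ₘ w, ?_⟩
      rw [hxy, hw]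
      ext v
      simp only [Multiset.count_cons, Multiset.count_add]
      split_ifs <;> omega

lemma JW_even_sum_map (x : Multiset ℕ) (φ : ℕ → ℕ) (hev : ∀ v, Even (x.count v)) :
    (x.map φ).sum % 2 = 0 := by
  obtain ⟨w, hw⟩ := JW_even_exists_double (Multiset.card x) x rfl hev
  rw [hw]
  simp only [Multiset.map_add, Multiset.sum_add]
  omega

lemma JW_even_card (x : Multiset ℕ) (hev : ∀ v, Even (x.count v)) :
    Multiset.card x % 2 = 0 := by
  obtain ⟨w, hw⟩ := JW_even_exists_double (Multiset.card x) x rfl hev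
  rw [hw]
  simp only [Multiset.card_add]
  omega

lemma JW_oddsum (y : Multiset ℕ) (h : ∀ a ∈ y, a % 2 = 1) :
    y.sum % 2 = (Multiset.card y) % 2 := by
  induction y using Multiset.induction with
  | empty => simp
  | cons a x ih =>
    have h1 : a % 2 = 1 := h a (Multiset.mem_cons_self a x)
    have h2 : x.sum % 2 = Multiset.card x % 2 := ih (fun b hb => h b (Multiset.mem_cons_of_mem hb))
    simp only [Multiset.sum_cons, Multiset.card_cons]
    omega

lemma JW_oddsub (y : Multiset ℕ) (m : ℕ) (h : ∀ a ∈ y, a % 2 = 1) :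
    (y.map (fun a => a - m)).sum % 2 = ((m + 1) * sCount y (m + 1)) % 2 := by
  induction y using Multiset.induction with
  | empty => simp [JW_sCount_zero]
  | cons a x ih =>
    have h1 : a % 2 = 1 := h a (Multiset.mem_cons_self a x)
    have h2 := ih (fun b hb => h b (Multiset.mem_cons_of_mem hb))
    simp only [Multiset.map_cons, Multiset.sum_cons, JW_sCount_cons]
    by_cases hma : m + 1 ≤ a
    · rw [if_pos hma, Nat.mul_add, Nat.mul_one]
      set P := (m + 1) * sCount x (m + 1)
      omega
    · rw [if_neg hma]
      simp only [Nat.add_zero]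
      set P := (m + 1) * sCount x (m + 1)
      omega

lemma JW_count_filter_even (x : Multiset ℕ) (horth : IsOrthogonal x) (v : ℕ) :
    Even ((x.filter (fun a => ¬ a % 2 = 1)).count v) := by
  rw [Multiset.count_filter]
  by_cases h : v % 2 = 1
  · rw [if_neg (by simp [h])]
    exact Even.zero
  · rw [if_pos h]
    exact horth v (by omega)

lemma JW_orth_par (x : Multiset ℕ) (horth : IsOrthogonal x) :
    x.sum % 2 = (Multiset.card x) % 2 := by
  have hsplit := Multiset.filter_add_not (fun a => a % 2 = 1) x
  set yo := x.filter (fun a => a % 2 = 1)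
  set ye := x.filter (fun a => ¬ a % 2 = 1)
  have h1 : yo.sum % 2 = (Multiset.card yo) % 2 :=
    JW_oddsum yo (fun a ha => (Multiset.mem_filter.mp ha).2)
  have h2 : ye.sum % 2 = 0 := by
    have := JW_even_sum_map ye id (JW_count_filter_even x horth)
    simpa using this
  have h3 : (Multiset.card ye) % 2 = 0 := JW_even_card ye (JW_count_filter_even x horth)
  have h4 : yo.sum + ye.sum = x.sum := by rw [← Multiset.sum_add, hsplit]
  have h5 : Multiset.card yo + Multiset.card ye = Multiset.card x := by
    rw [← Multiset.card_add, hsplit]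
  omega

end JWParity

section JWEps

open Finset

/-- odd parts -/
def oddF (x : Multiset ℕ) : Multiset ℕ := x.filter (fun a => a % 2 = 1)

def epsF (x : Multiset ℕ) (k : ℕ) : ℕ :=
  if 1 ≤ rCount (oddF x) k ∨ sCount (oddF x) k % 2 = 1 then 1 else 0

def gF (x : Multiset ℕ) (k : ℕ) : ℕ := sCount x (k + 1)

def GF (x : Multiset ℕ) (m : ℕ) : ℕ := ∑ k ∈ Finset.range m, gF x k

def chatF (x : Multiset ℕ) (k : ℕ) : ℕ := gF x k + epsF x k - epsF x (k + 1)

def UF (x : Multiset ℕ) (m : ℕ) : ℕ := (x.map (fun a => a - m)).sum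

lemma JW_eps_le_one (x : Multiset ℕ) (k : ℕ) : epsF x k ≤ 1 := by
  rw [epsF]; split <;> omega

lemma JW_oddF_mem_odd {x : Multiset ℕ} {a : ℕ} (h : a ∈ oddF x) : a % 2 = 1 :=
  (Multiset.mem_filter.mp h).2

lemma JW_sCount_filter_le (x : Multiset ℕ) (p : ℕ → Prop) [DecidablePred p] (i : ℕ) :
    sCount (x.filter p) i ≤ sCount x i :=
  Multiset.card_le_card (Multiset.filter_le_filter _ (Multiset.filter_le p x))

lemma JW_eps_pos_scount {x : Multiset ℕ} {k : ℕ} (h : epsF x k = 1) :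
    1 ≤ sCount (oddF x) k := by
  rw [epsF] at h
  split at h
  · rename_i hd
    have hsplit := JW_sCount_split (oddF x) k
    rcases hd with hd | hd
    · omega
    · omega
  · omega

lemma JW_eps_succ_le (x : Multiset ℕ) (k : ℕ) :
    epsF x (k + 1) ≤ gF x k + epsF x k := by
  by_cases h : epsF x (k + 1) = 1
  · have h1 := JW_eps_pos_scount h
    have h2 : sCount (oddF x) (k + 1) ≤ sCount x (k + 1) := JW_sCount_filter_le x _ (k + 1)
    rw [gF]
    omega
  · have := JW_eps_le_one x (k + 1); omega

lemma JW_GF_cons (a : ℕ) (x : Multiset ℕ) (m : ℕ) :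
    GF (a ::ₘ x) m = GF x m + min a m := by
  simp only [GF, gF, JW_sCount_cons, Finset.sum_add_distrib]
  congr 1
  rw [Finset.sum_boole]
  have h2 : Finset.filter (fun k => k + 1 ≤ a) (Finset.range m) = Finset.range (min a m) := by
    ext k; simp only [Finset.mem_filter, Finset.mem_range]; omega
  rw [h2, Finset.card_range]
  simp

lemma JW_GU (x : Multiset ℕ) (m : ℕ) : GF x m + UF x m = x.sum := by
  induction x using Multiset.induction with
  | empty => simp [GF, UF, gF, JW_sCount_zero]
  | cons a x ih =>
    rw [JW_GF_cons]
    simp only [UF, Multiset.map_cons, Multiset.sum_cons, Multiset.sum_cons] at *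
    omega

lemma JW_Upar (x : Multiset ℕ) (horth : IsOrthogonal x) (m : ℕ) :
    UF x m % 2 = ((m + 1) * sCount (oddF x) (m + 1)) % 2 := by
  have hsplit := Multiset.filter_add_not (fun a => a % 2 = 1) x
  have hU : UF x m = UF (oddF x) m + UF (x.filter (fun a => ¬ a % 2 = 1)) m := by
    rw [UF, UF, UF, ← Multiset.sum_add, ← Multiset.map_add, oddF, hsplit]
  have h1 : UF (oddF x) m % 2 = ((m + 1) * sCount (oddF x) (m + 1)) % 2 :=
    JW_oddsub (oddF x) m (fun a ha => JW_oddF_mem_odd ha)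
  have h2 : UF (x.filter (fun a => ¬ a % 2 = 1)) m % 2 = 0 :=
    JW_even_sum_map _ _ (JW_count_filter_even x horth)
  omega

lemma JW_Upar_odd (x : Multiset ℕ) (horth : IsOrthogonal x) (m : ℕ) (hm : m % 2 = 1) :
    UF x m % 2 = 0 := by
  have := JW_Upar x horth m
  have h2 : (m + 1) * sCount (oddF x) (m + 1) % 2 = 0 := by
    have hm2 : (m + 1) % 2 = 0 := by omega
    rw [Nat.mul_mod, hm2]
    simp
  omega

lemma JW_rCount_oddF_even (x : Multiset ℕ) (k : ℕ) (hk : k % 2 = 0) :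
    rCount (oddF x) k = 0 := by
  rw [rCount, oddF, Multiset.count_filter, if_neg (by omega)]

lemma JW_eps_zero (x : Multiset ℕ) (k : ℕ) (h : sCount (oddF x) k = 0) : epsF x k = 0 := by
  have hsplit := JW_sCount_split (oddF x) k
  rw [epsF, if_neg]
  push_neg
  constructor <;> omega

lemma JW_eps0 (x : Multiset ℕ) (horth : IsOrthogonal x) (heven : x.sum % 2 = 0) :
    epsF x 0 = 0 := by
  have h1 : rCount (oddF x) 0 = 0 := JW_rCount_oddF_even x 0 rfl
  have h2 : sCount (oddF x) 0 % 2 = 0 := by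
    have hc : sCount (oddF x) 0 = Multiset.card (oddF x) := by
      rw [sCount, Multiset.filter_eq_self.mpr (fun a _ => Nat.zero_le a)]
    have h3 : (oddF x).sum % 2 = Multiset.card (oddF x) % 2 :=
      JW_oddsum _ (fun a ha => JW_oddF_mem_odd ha)
    have hsplit := Multiset.filter_add_not (fun a => a % 2 = 1) x
    have h4 : (oddF x).sum + (x.filter (fun a => ¬ a % 2 = 1)).sum = x.sum := by
      rw [oddF, ← Multiset.sum_add, hsplit]
    have h5 : (x.filter (fun a => ¬ a % 2 = 1)).sum % 2 = 0 := by
      have := JW_even_sum_map _ id (JW_count_filter_even x horth)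
      simpa using this
    omega
  rw [epsF, if_neg]
  push_neg
  constructor <;> omega

end JWEps


section JWRow

open Finset

/-- `f` enumerates the parts of `x` in weakly decreasing order (0-indexed, padded by 0). -/
def RowFn (x : Multiset ℕ) (f : ℕ → ℕ) : Prop :=
  (∀ a ∈ x, 0 < a) ∧ Antitone f ∧ (∀ k, f k ≤ x.sum) ∧
    ∀ i, 1 ≤ i → sCount x i = ((Finset.range (x.sum + 1)).filter (fun k => i ≤ f k)).card

lemma JW_filter_range_lt (M v : ℕ) :
    (Finset.range M).filter (fun k => k < v) = Finset.range (min v M) := by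
  ext k; simp only [Finset.mem_filter, Finset.mem_range, lt_min_iff]; omega

lemma JW_DC {f : ℕ → ℕ} (hf : Antitone f) (M i : ℕ) :
    (Finset.range M).filter (fun k => i ≤ f k) =
      Finset.range (((Finset.range M).filter (fun k => i ≤ f k)).card) := by
  set S := (Finset.range M).filter (fun k => i ≤ f k) with hS
  have hdc : ∀ j k, j ≤ k → k ∈ S → j ∈ S := by
    intro j k hjk hk
    rw [hS, Finset.mem_filter, Finset.mem_range] at hk ⊢
    exact ⟨by omega, le_trans hk.2 (hf hjk)⟩
  ext k
  simp only [Finset.mem_range]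
  constructor
  · intro hk
    have hsub : Finset.range (k + 1) ⊆ S := by
      intro j hj
      rw [Finset.mem_range] at hj
      exact hdc j k (by omega) hk
    have := Finset.card_le_card hsub
    rw [Finset.card_range] at this
    omega
  · intro hk
    by_contra hk'
    have hsub : S ⊆ Finset.range k := by
      intro j hj
      rw [Finset.mem_range]
      by_contra hjk
      exact hk' (hdc k j (by omega) hj)
    have := Finset.card_le_card hsub
    rw [Finset.card_range] at this
    omega

lemma JW_rowfn_zero {x : Multiset ℕ} {f : ℕ → ℕ} (h : RowFn x f) :
    ∀ k, x.sum ≤ k → f k = 0 := by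
  obtain ⟨hpos, hanti, hle, hcount⟩ := h
  have hN : f x.sum = 0 := by
    by_contra hne
    have h1 : ∀ k ∈ Finset.range (x.sum + 1), 1 ≤ f k := by
      intro k hk
      rw [Finset.mem_range] at hk
      have := hanti (show k ≤ x.sum by omega)
      omega
    have h2 := hcount 1 le_rfl
    rw [Finset.filter_true_of_mem h1, Finset.card_range] at h2
    have h3 : sCount x 1 ≤ Multiset.card x := JW_sCount_le_card x 1
    have h4 : Multiset.card x ≤ x.sum := JW_card_le_sum hpos
    omega
  intro k hk
  have := hanti hk
  omega

lemma JW_rowfn_iff {x : Multiset ℕ} {f : ℕ → ℕ} (h : RowFn x f) :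
    ∀ i, 1 ≤ i → ∀ k, (i ≤ f k ↔ k < sCount x i) := by
  obtain ⟨hpos, hanti, hle, hcount⟩ := h
  intro i hi k
  have hDC := JW_DC hanti (x.sum + 1) i
  rw [← hcount i hi] at hDC
  constructor
  · intro hfk
    by_cases hk : k ≤ x.sum
    · have : k ∈ (Finset.range (x.sum + 1)).filter (fun k => i ≤ f k) := by
        rw [Finset.mem_filter, Finset.mem_range]; exact ⟨by omega, hfk⟩
      rw [hDC, Finset.mem_range] at this
      exact this
    · have := JW_rowfn_zero ⟨hpos, hanti, hle, hcount⟩ k (by omega)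
      omega
  · intro hk
    have hsc : sCount x i ≤ x.sum + 1 := by
      have := JW_sCount_le_card x i
      have := JW_card_le_sum hpos
      omega
    have : k ∈ Finset.range (sCount x i) := Finset.mem_range.mpr hk
    rw [← hDC, Finset.mem_filter] at this
    exact this.2

lemma JW_bridge {x : Multiset ℕ} {f : ℕ → ℕ} (h : RowFn x f) (m : ℕ) :
    topSum x m = ∑ k ∈ Finset.range m, f k := by
  obtain ⟨hpos, hanti, hle, hcount⟩ := h
  have hiff := JW_rowfn_iff ⟨hpos, hanti, hle, hcount⟩
  rw [topSum]
  have step1 : ∀ i ∈ Icc 1 x.sum,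
      min m (sCount x i) = ∑ k ∈ Finset.range m, (if i ≤ f k then 1 else 0) := by
    intro i hi
    rw [Finset.mem_Icc] at hi
    rw [Finset.sum_boole]
    have : Finset.filter (fun k => i ≤ f k) (Finset.range m) =
        Finset.filter (fun k => k < sCount x i) (Finset.range m) := by
      apply Finset.filter_congr
      intro k _
      exact hiff i hi.1 k
    rw [this, JW_filter_range_lt, Finset.card_range]
    rw [Nat.cast_id, Nat.min_comm]
  rw [Finset.sum_congr rfl step1, Finset.sum_comm]
  apply Finset.sum_congr rfl
  intro k _
  rw [Finset.sum_boole]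
  have : Finset.filter (fun i => i ≤ f k) (Icc 1 x.sum) = Icc 1 (f k) := by
    ext i
    simp only [Finset.mem_filter, Finset.mem_Icc]
    have := hle k
    omega
  rw [this]
  simp [Nat.card_Icc]

lemma JW_rowfn_succ {x : Multiset ℕ} {f : ℕ → ℕ} (h : RowFn x f) (k : ℕ) :
    topSum x (k + 1) = topSum x k + f k := by
  rw [JW_bridge h, JW_bridge h, Finset.sum_range_succ]

lemma JW_rowfn_exists (x : Multiset ℕ) (hpos : ∀ a ∈ x, 0 < a) :
    RowFn x (fun k => ((Finset.Icc 1 x.sum).filter (fun i => k + 1 ≤ sCount x i)).card) := by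
  set f := fun k => ((Finset.Icc 1 x.sum).filter (fun i => k + 1 ≤ sCount x i)).card with hf
  have hanti : Antitone f := by
    intro k k' hkk
    apply Finset.card_le_card
    intro i hi
    rw [Finset.mem_filter] at hi ⊢
    exact ⟨hi.1, by omega⟩
  have hle : ∀ k, f k ≤ x.sum := by
    intro k
    calc f k ≤ (Finset.Icc 1 x.sum).card := Finset.card_le_card (Finset.filter_subset _ _)
    _ = x.sum := by simp [Nat.card_Icc]
  have hkey : ∀ i, 1 ≤ i → ∀ k, (i ≤ f k ↔ k + 1 ≤ sCount x i) := by
    intro i hi k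
    constructor
    · intro hfk
      by_contra hsc
      have hsub : (Finset.Icc 1 x.sum).filter (fun i' => k + 1 ≤ sCount x i') ⊆
          Finset.Icc 1 (i - 1) := by
        intro i' hi'
        rw [Finset.mem_filter, Finset.mem_Icc] at hi'
        rw [Finset.mem_Icc]
        refine ⟨hi'.1.1, ?_⟩
        by_contra hii
        have := JW_sCount_anti x (show i ≤ i' by omega)
        omega
      have := Finset.card_le_card hsub
      rw [Nat.card_Icc] at this
      have hfk' : i ≤ ((Finset.Icc 1 x.sum).filter (fun i' => k + 1 ≤ sCount x i')).card := hfk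
      omega
    · intro hsc
      have hiN : i ≤ x.sum := by
        have h1 : 1 ≤ sCount x i := by omega
        rw [sCount] at h1
        have h2 : 0 < Multiset.card (x.filter (fun a => i ≤ a)) := by omega
        obtain ⟨a, ha⟩ := Multiset.card_pos_iff_exists_mem.mp h2
        rw [Multiset.mem_filter] at ha
        have h3 := JW_mem_le_sum ha.1
        omega
      have hsub : Finset.Icc 1 i ⊆ (Finset.Icc 1 x.sum).filter (fun i' => k + 1 ≤ sCount x i') := by
        intro i' hi'
        rw [Finset.mem_Icc] at hi'
        rw [Finset.mem_filter, Finset.mem_Icc]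
        refine ⟨⟨hi'.1, by omega⟩, ?_⟩
        have := JW_sCount_anti x (show i' ≤ i by omega)
        omega
      have := Finset.card_le_card hsub
      rw [Nat.card_Icc] at this
      have hgoal : i ≤ ((Finset.Icc 1 x.sum).filter (fun i' => k + 1 ≤ sCount x i')).card := by
        omega
      exact hgoal
  refine ⟨hpos, hanti, hle, ?_⟩
  intro i hi
  have : Finset.filter (fun k => i ≤ f k) (Finset.range (x.sum + 1)) =
      Finset.filter (fun k => k < sCount x i) (Finset.range (x.sum + 1)) := by
    apply Finset.filter_congr
    intro k _
    rw [hkey i hi k]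
    omega
  rw [this, JW_filter_range_lt, Finset.card_range]
  have h1 : sCount x i ≤ x.sum := by
    have := JW_sCount_le_card x i
    have := JW_card_le_sum hpos
    omega
  omega

end JWRow


section JWCorner

open Finset

lemma JW_orth_filter (x : Multiset ℕ) (horth : IsOrthogonal x) (p : ℕ → Prop)
    [DecidablePred p] : IsOrthogonal (x.filter p) := by
  intro a ha
  rw [Multiset.count_filter]
  split_ifs with h
  · exact horth a ha
  · exact Even.zero

lemma JW_sCount_bound {x : Multiset ℕ} {w : ℕ} (h : sCount x w = 0) :
    ∀ a ∈ x, a < w := by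
  intro a ha
  by_contra hc
  have : a ∈ x.filter (fun b => w ≤ b) := Multiset.mem_filter.mpr ⟨ha, by omega⟩
  have h2 : 0 < sCount x w := by
    rw [sCount]
    exact Multiset.card_pos_iff_exists_mem.mpr ⟨a, this⟩
  omega

lemma JW_cornerPar {x : Multiset ℕ} {f : ℕ → ℕ} (hrow : RowFn x f)
    (horth : IsOrthogonal x) (b : ℕ) (hb : 1 ≤ b) (hcorner : f b < f (b - 1)) :
    topSum x b % 2 = b % 2 := by
  have hiff := JW_rowfn_iff hrow
  set w := f b with hw
  set N := x.sum with hN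
  have h1 : sCount x (w + 1) = b := by
    have ha : b - 1 < sCount x (w + 1) := (hiff (w + 1) (by omega) (b - 1)).mp (by omega)
    have hbnot : ¬ (b < sCount x (w + 1)) := by
      intro hcon
      have := (hiff (w + 1) (by omega) b).mpr hcon
      omega
    omega
  set y := x.filter (fun a => w + 1 ≤ a) with hy
  have hycard : Multiset.card y = b := h1
  have horthy : IsOrthogonal y := JW_orth_filter x horth _
  have hpar : y.sum % 2 = b % 2 := by
    rw [JW_orth_par y horthy, hycard]
  have hmain : topSum x b = y.sum := by
    have hyB : ∀ a ∈ y, a ≤ N := by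
      intro a ha
      exact JW_mem_le_sum (Multiset.mem_of_mem_filter ha)
    rw [← JW_sum_sCount_Icc y N hyB, topSum, ← hN]
    apply Finset.sum_congr rfl
    intro i hi
    rw [Finset.mem_Icc] at hi
    by_cases hiw : w + 1 ≤ i
    · have hs1 : sCount y i = sCount x i := by
        rw [sCount, hy, Multiset.filter_filter]
        congr 1
        apply Multiset.filter_congr
        intro a _
        constructor
        · intro hh; exact hh.1
        · intro hh; exact ⟨hh, by omega⟩
      have hs2 : sCount x i ≤ b := by
        rw [← h1]
        exact JW_sCount_anti x hiw
      rw [hs1]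
      omega
    · have hs1 : sCount y i = b := by
        rw [← hycard, sCount]
        congr 1
        rw [Multiset.filter_eq_self]
        intro a ha
        have := Multiset.mem_filter.mp ha
        omega
      have hs2 : b ≤ sCount x i := by
        rw [← h1]
        exact JW_sCount_anti x (by omega)
      rw [hs1]
      omega
  omega

end JWCorner

section JWEngine

open Finset

lemma JW_GF_succ (p : Multiset ℕ) (m : ℕ) : GF p (m + 1) = GF p m + gF p m := by
  rw [GF, GF, Finset.sum_range_succ]

lemma JW_odd_mul_par (a s : ℕ) (h : a % 2 = 1) : (a * s) % 2 = s % 2 := by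
  rw [Nat.mul_mod, h, one_mul]
  omega

lemma JW_engine (p e : Multiset ℕ) (hporth : IsOrthogonal p) (heorth : IsOrthogonal e)
    (hepos : ∀ a ∈ e, 0 < a) (hsum : e.sum = p.sum) (hNeven : p.sum % 2 = 0)
    (hdom : ∀ m, topSum e m ≤ GF p m) :
    ∀ u k, k % 2 = 0 → topSum e k = GF p k → GF p k + u = p.sum → u % 2 = 1 → False := by
  set f : ℕ → ℕ := fun k => ((Finset.Icc 1 e.sum).filter (fun i => k + 1 ≤ sCount e i)).card
    with hf
  have hrow : RowFn e f := JW_rowfn_exists e hepos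
  have hanti : Antitone f := hrow.2.1
  intro u
  induction u using Nat.strong_induction_on with
  | _ u ih =>
    intro k hk heq hGu hodd
    rcases Nat.eq_zero_or_pos k with hk0 | hkpos
    · subst hk0
      rw [GF, Finset.sum_range_zero] at hGu
      omega
    obtain ⟨j, rfl⟩ : ∃ j, k = j + 1 := ⟨k - 1, by omega⟩
    have hsucc0 : topSum e (j + 1) = topSum e j + f j := JW_rowfn_succ hrow j
    have hsucc1 : topSum e (j + 2) = topSum e (j + 1) + f (j + 1) := JW_rowfn_succ hrow (j + 1)
    have hG0 : GF p (j + 1) = GF p j + gF p j := JW_GF_succ p j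
    have hG1 : GF p (j + 2) = GF p (j + 1) + gF p (j + 1) := JW_GF_succ p (j + 1)
    have hfk_le : f (j + 1) ≤ gF p (j + 1) := by
      have h2 := hdom (j + 2)
      omega
    have hfk1_ge : gF p j ≤ f j := by
      have h2 := hdom j
      omega
    by_cases hc : f (j + 1) < f j
    · have hcp := JW_cornerPar hrow heorth (j + 1) (by omega) (by simpa using hc)
      omega
    · push_neg at hc
      have hfeq : f j = f (j + 1) := le_antisymm hc (hanti (by omega))
      set v := f (j + 1) with hv
      have hganti : gF p (j + 1) ≤ gF p j := JW_sCount_anti p (by omega)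
      have hveq1 : v = gF p (j + 1) := by omega
      have hveq0 : v = gF p j := by omega
      by_cases hv0 : v = 0
      · have hU : UF p (j + 1) = 0 := by
          rw [UF]
          rw [Multiset.sum_eq_zero]
          intro b hb
          obtain ⟨a, ha, rfl⟩ := Multiset.mem_map.mp hb
          have hsc0 : sCount p (j + 2) = 0 := by
            have hg0 : gF p (j + 1) = 0 := by omega
            exact hg0
          have := JW_sCount_bound hsc0 a ha
          omega
        have hGU : GF p (j + 1) + UF p (j + 1) = p.sum := JW_GU p (j + 1)
        omega
      · by_cases hvpar : v % 2 = 0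
        · have hUk1 : UF p (j + 2) % 2 = 0 := JW_Upar_odd p hporth (j + 2) (by omega)
          have hGU : GF p (j + 2) + UF p (j + 2) = p.sum := JW_GU p (j + 2)
          omega
        · -- v odd
          have heq1 : topSum e (j + 2) = GF p (j + 2) := by omega
          have hsucc2 : topSum e (j + 3) = topSum e (j + 2) + f (j + 2) :=
            JW_rowfn_succ hrow (j + 2)
          have hG2 : GF p (j + 3) = GF p (j + 2) + gF p (j + 2) := JW_GF_succ p (j + 2)
          by_cases hc2 : f (j + 2) < f (j + 1)
          · have hcp := JW_cornerPar hrow heorth (j + 2) (by omega) (by simpa using hc2)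
            omega
          · push_neg at hc2
            have hfeq2 : f (j + 2) = v := le_antisymm (hanti (by omega)) hc2
            have hfk2_le : f (j + 2) ≤ gF p (j + 2) := by
              have h2 := hdom (j + 3)
              omega
            have hganti2 : gF p (j + 2) ≤ gF p (j + 1) := JW_sCount_anti p (by omega)
            have hgv2 : gF p (j + 2) = v := by omega
            have heq2 : topSum e (j + 3) = GF p (j + 3) := by omega
            have hGU3 : GF p (j + 3) + UF p (j + 3) = p.sum := JW_GU p (j + 3)
            exact ih (u - 2 * v) (by omega) (j + 3) (by omega) heq2 (by omega) (by omega)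

lemma JW_thmU (p e : Multiset ℕ) (hporth : IsOrthogonal p) (hNeven : p.sum % 2 = 0)
    (heorth : IsOrthogonal e) (hepos : ∀ a ∈ e, 0 < a) (hsum : e.sum = p.sum)
    (hdom : ∀ m, topSum e m ≤ GF p m) (m : ℕ) (heps : epsF p m = 1) :
    topSum e m + 1 ≤ GF p m := by
  by_contra hcon
  have heq : topSum e m = GF p m := by
    have := hdom m
    omega
  have hm0 : m ≠ 0 := by
    intro h0
    rw [h0, JW_eps0 p hporth hNeven] at heps
    omega
  have hd : 1 ≤ rCount (oddF p) m ∨ sCount (oddF p) m % 2 = 1 := by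
    rw [epsF] at heps
    by_contra hno
    rw [if_neg hno] at heps
    omega
  by_cases hm2 : m % 2 = 0
  · -- m even
    have hsplitb : sCount (oddF p) m = rCount (oddF p) m + sCount (oddF p) (m + 1) :=
      JW_sCount_split (oddF p) m
    have hrc : rCount (oddF p) m = 0 := JW_rCount_oddF_even p m hm2
    have hb : sCount (oddF p) m % 2 = 1 := by rcases hd with h | h <;> omega
    have hU : UF p m % 2 = (m + 1) * sCount (oddF p) (m + 1) % 2 := JW_Upar p hporth m
    have hodd : UF p m % 2 = 1 := by
      rw [JW_odd_mul_par (m + 1) _ (by omega)] at hU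
      omega
    exact JW_engine p e hporth heorth hepos hsum hNeven hdom (UF p m) m hm2 heq
      (JW_GU p m) hodd
  · -- m odd
    have hUm : UF p m % 2 = 0 := JW_Upar_odd p hporth m (by omega)
    set f : ℕ → ℕ := fun k => ((Finset.Icc 1 e.sum).filter (fun i => k + 1 ≤ sCount e i)).card
      with hf
    have hrow : RowFn e f := JW_rowfn_exists e hepos
    have hanti : Antitone f := hrow.2.1
    obtain ⟨j, rfl⟩ : ∃ j, m = j + 1 := ⟨m - 1, by omega⟩
    have hsucc0 : topSum e (j + 1) = topSum e j + f j := JW_rowfn_succ hrow j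
    have hsucc1 : topSum e (j + 2) = topSum e (j + 1) + f (j + 1) := JW_rowfn_succ hrow (j + 1)
    have hG0 : GF p (j + 1) = GF p j + gF p j := JW_GF_succ p j
    have hG1 : GF p (j + 2) = GF p (j + 1) + gF p (j + 1) := JW_GF_succ p (j + 1)
    have hfk_le : f (j + 1) ≤ gF p (j + 1) := by
      have h2 := hdom (j + 2)
      omega
    have hfk1_ge : gF p j ≤ f j := by
      have h2 := hdom j
      omega
    have hGUj : GF p j + UF p j = p.sum := JW_GU p j
    have hGUj1 : GF p (j + 1) + UF p (j + 1) = p.sum := JW_GU p (j + 1)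
    by_cases hc : f (j + 1) < f j
    · have hcp := JW_cornerPar hrow heorth (j + 1) (by omega) (by simpa using hc)
      omega
    · push_neg at hc
      have hfeq : f j = f (j + 1) := le_antisymm hc (hanti (by omega))
      set v := f (j + 1) with hv
      have hganti : gF p (j + 1) ≤ gF p j := JW_sCount_anti p (by omega)
      have hveq1 : v = gF p (j + 1) := by omega
      have hveq0 : v = gF p j := by omega
      -- rCount p (j+1) = 0 since gF p j = gF p (j+1)
      have hsplitp : sCount p (j + 1) = rCount p (j + 1) + sCount p (j + 2) :=
        JW_sCount_split p (j + 1)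
      have hgj : gF p j = sCount p (j + 1) := rfl
      have hgj1 : gF p (j + 1) = sCount p (j + 2) := rfl
      have hrcp : rCount p (j + 1) = 0 := by omega
      have hrcf : rCount (oddF p) (j + 1) ≤ rCount p (j + 1) := by
        rw [rCount, rCount, oddF]
        exact Multiset.count_le_of_le _ (Multiset.filter_le _ p)
      have hb : sCount (oddF p) (j + 1) % 2 = 1 := by rcases hd with h | h <;> omega
      -- U j is odd
      have hUj : UF p j % 2 = (j + 1) * sCount (oddF p) (j + 1) % 2 := JW_Upar p hporth j
      have hUjodd : UF p j % 2 = 1 := by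
        rw [JW_odd_mul_par (j + 1) _ (by omega)] at hUj
        omega
      -- v odd
      have hvodd : v % 2 = 1 := by omega
      -- equality at j+2
      have heq1 : topSum e (j + 2) = GF p (j + 2) := by omega
      have hGUj2 : GF p (j + 2) + UF p (j + 2) = p.sum := JW_GU p (j + 2)
      exact JW_engine p e hporth heorth hepos hsum hNeven hdom (UF p (j + 2)) (j + 2)
        (by omega) heq1 hGUj2 (by omega)

end JWEngine


section JWChat

open Finset

lemma JW_eps_one_char {x : Multiset ℕ} {k : ℕ} (h : epsF x k = 1) :
    1 ≤ rCount (oddF x) k ∨ sCount (oddF x) k % 2 = 1 := by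
  rw [epsF] at h
  by_contra hno
  rw [if_neg hno] at h
  omega

lemma JW_eps_zero_char {x : Multiset ℕ} {k : ℕ} (h : epsF x k = 0) :
    rCount (oddF x) k = 0 ∧ sCount (oddF x) k % 2 = 0 := by
  rw [epsF] at h
  by_cases hc : 1 ≤ rCount (oddF x) k ∨ sCount (oddF x) k % 2 = 1
  · rw [if_pos hc] at h; omega
  · push_neg at hc; exact ⟨by omega, by omega⟩

lemma JW_eps_of {x : Multiset ℕ} {k : ℕ}
    (h : 1 ≤ rCount (oddF x) k ∨ sCount (oddF x) k % 2 = 1) : epsF x k = 1 := by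
  rw [epsF, if_pos h]

lemma JW_rc_eq {x : Multiset ℕ} {k : ℕ} (hk : k % 2 = 1) :
    rCount (oddF x) k = rCount x k := by
  rw [rCount, rCount, oddF, Multiset.count_filter, if_pos hk]

lemma JW_rc_le (x : Multiset ℕ) (k : ℕ) : rCount (oddF x) k ≤ rCount x k := by
  rw [rCount, rCount, oddF]
  exact Multiset.count_le_of_le _ (Multiset.filter_le _ x)

lemma JW_chat_anti (x : Multiset ℕ) : Antitone (chatF x) := by
  apply antitone_nat_of_succ_le
  intro k
  have e0le := JW_eps_le_one x k
  have e1le := JW_eps_le_one x (k + 1)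
  have e2le := JW_eps_le_one x (k + 2)
  have i1 : epsF x (k + 1) ≤ gF x k + epsF x k := JW_eps_succ_le x k
  have i2 : epsF x (k + 2) ≤ gF x (k + 1) + epsF x (k + 1) := JW_eps_succ_le x (k + 1)
  have ganti : gF x (k + 1) ≤ gF x k := JW_sCount_anti x (by omega)
  have grel : gF x k = rCount x (k + 1) + gF x (k + 1) := JW_sCount_split x (k + 1)
  have bs0 : sCount (oddF x) k = rCount (oddF x) k + sCount (oddF x) (k + 1) :=
    JW_sCount_split (oddF x) k
  have bs1 : sCount (oddF x) (k + 1) = rCount (oddF x) (k + 1) + sCount (oddF x) (k + 2) :=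
    JW_sCount_split (oddF x) (k + 1)
  have rcle : rCount (oddF x) (k + 1) ≤ rCount x (k + 1) := JW_rc_le x (k + 1)
  show gF x (k + 1) + epsF x (k + 1) - epsF x (k + 2) ≤ gF x k + epsF x k - epsF x (k + 1)
  by_cases he1 : epsF x (k + 1) = 0
  · omega
  · have he1' : epsF x (k + 1) = 1 := by omega
    by_cases he0 : epsF x k = 0
    · -- eps k = 0
      obtain ⟨hz0, hz1⟩ := JW_eps_zero_char he0
      by_cases he2 : epsF x (k + 2) = 0
      · obtain ⟨hz2, hz3⟩ := JW_eps_zero_char he2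
        -- need rCount x (k+1) ≥ 2
        rcases JW_eps_one_char he1' with hd | hd
        · -- rc(k+1) ≥ 1 ; also b(k+1) = b k even, b(k+2) even so rc (k+1) even
          omega
        · -- b(k+1) odd, but b(k+1) = b k even: contradiction
          omega
      · have he2' : epsF x (k + 2) = 1 := by omega
        -- need rCount x (k+1) ≥ 1
        rcases JW_eps_one_char he1' with hd | hd
        · omega
        · omega
    · have he0' : epsF x k = 1 := by omega
      by_cases he2 : epsF x (k + 2) = 0
      · obtain ⟨hz2, hz3⟩ := JW_eps_zero_char he2
        -- need rCount x (k+1) ≥ 1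
        rcases JW_eps_one_char he1' with hd | hd
        · omega
        · omega
      · have he2' : epsF x (k + 2) = 1 := by omega
        omega

lemma JW_tele (x : Multiset ℕ) (m : ℕ) :
    ∑ k ∈ Finset.range m, chatF x k + epsF x m = GF x m + epsF x 0 := by
  induction m with
  | zero => simp [GF]
  | succ m ih =>
    rw [Finset.sum_range_succ, JW_GF_succ]
    have i1 : epsF x (m + 1) ≤ gF x m + epsF x m := JW_eps_succ_le x m
    rw [chatF]
    omega

lemma JW_chat_corner (x : Multiset ℕ) (horth : IsOrthogonal x) (heven : x.sum % 2 = 0)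
    (i : ℕ) (hcorner : chatF x (i + 1) < chatF x i) :
    (GF x (i + 1) + epsF x (i + 1) + (i + 1)) % 2 = 0 := by
  have e0le := JW_eps_le_one x i
  have e1le := JW_eps_le_one x (i + 1)
  have e2le := JW_eps_le_one x (i + 2)
  have i1 : epsF x (i + 1) ≤ gF x i + epsF x i := JW_eps_succ_le x i
  have i2 : epsF x (i + 2) ≤ gF x (i + 1) + epsF x (i + 1) := JW_eps_succ_le x (i + 1)
  have ganti : gF x (i + 1) ≤ gF x i := JW_sCount_anti x (by omega)
  have grel : gF x i = rCount x (i + 1) + gF x (i + 1) := JW_sCount_split x (i + 1)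
  have bs0 : sCount (oddF x) i = rCount (oddF x) i + sCount (oddF x) (i + 1) :=
    JW_sCount_split (oddF x) i
  have bs1 : sCount (oddF x) (i + 1) = rCount (oddF x) (i + 1) + sCount (oddF x) (i + 2) :=
    JW_sCount_split (oddF x) (i + 1)
  have hGU1 : GF x (i + 1) + UF x (i + 1) = x.sum := JW_GU x (i + 1)
  have hcorner' : gF x (i + 1) + epsF x (i + 1) - epsF x (i + 2) <
      gF x i + epsF x i - epsF x (i + 1) := hcorner
  clear hcorner
  by_cases hi2 : (i + 1) % 2 = 1
  · -- i+1 odd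
    have hU1 : UF x (i + 1) % 2 = 0 := JW_Upar_odd x horth (i + 1) hi2
    have heps1 : epsF x (i + 1) = 1 := by
      by_contra hne
      have he1 : epsF x (i + 1) = 0 := by omega
      obtain ⟨hz0, hz1⟩ := JW_eps_zero_char he1
      have hrcx : rCount x (i + 1) = 0 := by
        rw [← JW_rc_eq hi2]; exact hz0
      -- so g i = g (i+1); corner forces eps i = 1 or eps (i+2) = 1
      by_cases he0 : epsF x i = 1
      · -- i even: rc(oddF) i = 0, b i odd needed, but b i = b(i+1) even
        have hrci : rCount (oddF x) i = 0 := JW_rCount_oddF_even x i (by omega)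
        rcases JW_eps_one_char he0 with hd | hd <;> omega
      · by_cases he2 : epsF x (i + 2) = 1
        · have hrci2 : rCount (oddF x) (i + 2) = 0 := JW_rCount_oddF_even x (i + 2) (by omega)
          rcases JW_eps_one_char he2 with hd | hd <;> omega
        · omega
    omega
  · -- i+1 even
    have hodd2 : (i + 2) % 2 = 1 := by omega
    have hU1 : UF x (i + 1) % 2 = (i + 2) * sCount (oddF x) (i + 2) % 2 :=
      JW_Upar x horth (i + 1)
    rw [JW_odd_mul_par (i + 2) _ hodd2] at hU1
    have hrc1 : rCount (oddF x) (i + 1) = 0 := JW_rCount_oddF_even x (i + 1) (by omega)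
    by_cases hb : sCount (oddF x) (i + 1) % 2 = 1
    · have := JW_eps_of (Or.inr hb : 1 ≤ rCount (oddF x) (i + 1) ∨
        sCount (oddF x) (i + 1) % 2 = 1)
      omega
    · have he0 : epsF x (i + 1) = 0 := by
        rw [epsF, if_neg]
        push_neg
        exact ⟨by omega, by omega⟩
      omega

lemma JW_chat_zero (x : Multiset ℕ) (heven : x.sum % 2 = 0) (k : ℕ) (hk : x.sum ≤ k) :
    chatF x k = 0 := by
  have hsc : ∀ j, x.sum ≤ j → sCount (oddF x) j = 0 := by
    intro j hj
    by_contra hne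
    have h2 : 0 < Multiset.card ((oddF x).filter (fun a => j ≤ a)) := by
      rw [sCount] at hne; omega
    obtain ⟨a, ha⟩ := Multiset.card_pos_iff_exists_mem.mp h2
    rw [Multiset.mem_filter] at ha
    have hodd : a % 2 = 1 := JW_oddF_mem_odd ha.1
    have hle : a ≤ x.sum := JW_mem_le_sum (Multiset.mem_of_mem_filter ha.1)
    have : a = x.sum := by omega
    omega
  have he1 : epsF x k = 0 := JW_eps_zero x k (hsc k hk)
  have he2 : epsF x (k + 1) = 0 := JW_eps_zero x (k + 1) (hsc (k + 1) (by omega))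
  have hg : gF x k = 0 := JW_sCount_eq_zero (by omega)
  rw [chatF, hg, he1, he2]

/-- The explicit SO-collapse of `transpose x`. -/
def chatMS (x : Multiset ℕ) : Multiset ℕ :=
  ((Multiset.range (x.sum + 1)).map (chatF x)).filter (fun a => 0 < a)

lemma JW_sum_filter_pos (y : Multiset ℕ) : (y.filter (fun a => 0 < a)).sum = y.sum := by
  induction y using Multiset.induction with
  | empty => simp
  | cons a x ih =>
    rw [Multiset.filter_cons]
    by_cases h : 0 < a
    · rw [if_pos h]; simp [ih]
    · rw [if_neg h]; simp [ih]; omega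

lemma JW_GF_Icc (x : Multiset ℕ) (m : ℕ) : GF x m = ∑ i ∈ Icc 1 m, sCount x i := by
  induction m with
  | zero => simp [GF]
  | succ m ih =>
    rw [JW_GF_succ, ih, Finset.sum_Icc_succ_top (by omega : 1 ≤ m + 1)]
    rfl

lemma JW_chatMS_sum (x : Multiset ℕ) (horth : IsOrthogonal x) (heven : x.sum % 2 = 0) :
    (chatMS x).sum = x.sum := by
  rw [chatMS, JW_sum_filter_pos]
  have h1 : ((Multiset.range (x.sum + 1)).map (chatF x)).sum =
      ∑ k ∈ Finset.range (x.sum + 1), chatF x k := rfl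
  rw [h1]
  have h2 := JW_tele x (x.sum + 1)
  rw [JW_eps0 x horth heven] at h2
  have h3 : epsF x (x.sum + 1) = 0 := by
    have hsc : sCount (oddF x) (x.sum + 1) = 0 := by
      by_contra hne
      have h2' : 0 < Multiset.card ((oddF x).filter (fun a => x.sum + 1 ≤ a)) := by
        rw [sCount] at hne; omega
      obtain ⟨a, ha⟩ := Multiset.card_pos_iff_exists_mem.mp h2'
      rw [Multiset.mem_filter] at ha
      have hle : a ≤ x.sum := JW_mem_le_sum (Multiset.mem_of_mem_filter ha.1)
      omega
    exact JW_eps_zero x _ hsc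
  have h4 : GF x (x.sum + 1) = x.sum := by
    rw [JW_GF_Icc]
    exact JW_sum_sCount_Icc x (x.sum + 1) (fun a ha => by have := JW_mem_le_sum ha; omega)
  omega

lemma JW_chatMS_pos (x : Multiset ℕ) : ∀ a ∈ chatMS x, 0 < a := by
  intro a ha
  exact (Multiset.mem_filter.mp ha).2

lemma JW_countP_range (p : ℕ → Prop) [DecidablePred p] (n : ℕ) :
    Multiset.countP p (Multiset.range n) = ((Finset.range n).filter p).card := by
  rw [← Finset.range_val, Multiset.countP_eq_card_filter, ← Finset.filter_val]
  rfl

lemma JW_chatMS_count (x : Multiset ℕ) (i : ℕ) (hi : 1 ≤ i) :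
    sCount (chatMS x) i =
      ((Finset.range (x.sum + 1)).filter (fun k => i ≤ chatF x k)).card := by
  rw [sCount, chatMS, Multiset.filter_filter]
  have h1 : Multiset.filter (fun a => i ≤ a ∧ 0 < a)
      ((Multiset.range (x.sum + 1)).map (chatF x)) =
      Multiset.filter (fun a => i ≤ a) ((Multiset.range (x.sum + 1)).map (chatF x)) := by
    apply Multiset.filter_congr
    intro a _
    constructor
    · intro h; exact h.1
    · intro h; exact ⟨h, by omega⟩
  rw [h1, ← Multiset.countP_eq_card_filter, Multiset.countP_map,
    ← Multiset.countP_eq_card_filter]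
  exact JW_countP_range (fun k => i ≤ chatF x k) (x.sum + 1)

end JWChat


section JWChatMS

open Finset

lemma JW_chat_sum_range (x : Multiset ℕ) (horth : IsOrthogonal x) (heven : x.sum % 2 = 0) :
    ∑ k ∈ Finset.range (x.sum + 1), chatF x k = x.sum := by
  have h2 := JW_tele x (x.sum + 1)
  rw [JW_eps0 x horth heven] at h2
  have h3 : epsF x (x.sum + 1) = 0 := by
    have := JW_chat_zero x heven (x.sum + 1) (by omega)
    by_contra hne
    have h1 : epsF x (x.sum + 1) = 1 := by have := JW_eps_le_one x (x.sum + 1); omega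
    have h4 := JW_eps_pos_scount h1
    have h2' : 0 < Multiset.card ((oddF x).filter (fun a => x.sum + 1 ≤ a)) := by
      rw [sCount] at h4; omega
    obtain ⟨a, ha⟩ := Multiset.card_pos_iff_exists_mem.mp h2'
    rw [Multiset.mem_filter] at ha
    have hle : a ≤ x.sum := JW_mem_le_sum (Multiset.mem_of_mem_filter ha.1)
    omega
  have h4 : GF x (x.sum + 1) = x.sum := by
    rw [JW_GF_Icc]
    exact JW_sum_sCount_Icc x (x.sum + 1) (fun a ha => by have := JW_mem_le_sum ha; omega)
  omega

lemma JW_chatMS_sum' (x : Multiset ℕ) (horth : IsOrthogonal x) (heven : x.sum % 2 = 0) :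
    (chatMS x).sum = x.sum := by
  rw [chatMS, JW_sum_filter_pos]
  have h1 : ((Multiset.range (x.sum + 1)).map (chatF x)).sum =
      ∑ k ∈ Finset.range (x.sum + 1), chatF x k := rfl
  rw [h1]
  exact JW_chat_sum_range x horth heven

lemma JW_chat_le_sum (x : Multiset ℕ) (horth : IsOrthogonal x) (heven : x.sum % 2 = 0)
    (k : ℕ) : chatF x k ≤ x.sum := by
  by_cases hk : k ≤ x.sum
  · have h1 : chatF x k ≤ ∑ j ∈ Finset.range (x.sum + 1), chatF x j :=
      Finset.single_le_sum (fun j _ => Nat.zero_le _) (Finset.mem_range.mpr (by omega))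
    rw [JW_chat_sum_range x horth heven] at h1
    exact h1
  · rw [JW_chat_zero x heven k (by omega)]
    exact Nat.zero_le _

lemma JW_chatMS_orth (x : Multiset ℕ) (horth : IsOrthogonal x) (heven : x.sum % 2 = 0) :
    IsOrthogonal (chatMS x) := by
  intro v hv
  rcases Nat.eq_zero_or_pos v with hv0 | hvpos
  · subst hv0
    rw [chatMS, Multiset.count_filter, if_neg (by omega)]
    exact Even.zero
  set N := x.sum with hN
  have hcount : (chatMS x).count v =
      ((Finset.range (N + 1)).filter (fun k => v = chatF x k)).card := by
    rw [chatMS, Multiset.count_filter, if_pos hvpos, Multiset.count_map,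
      ← Multiset.countP_eq_card_filter]
    exact JW_countP_range (fun k => v = chatF x k) (N + 1)
  set b := ((Finset.range (N + 1)).filter (fun k => v ≤ chatF x k)).card with hbdef
  set a := ((Finset.range (N + 1)).filter (fun k => v + 1 ≤ chatF x k)).card with hadef
  have hDCb := JW_DC (JW_chat_anti x) (N + 1) v
  have hDCa := JW_DC (JW_chat_anti x) (N + 1) (v + 1)
  rw [← hbdef] at hDCb
  rw [← hadef] at hDCa
  have hab : a ≤ b := by
    rw [hadef, hbdef]
    apply Finset.card_le_card
    intro k hk
    rw [Finset.mem_filter] at hk ⊢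
    exact ⟨hk.1, by omega⟩
  have hsetv : (Finset.range (N + 1)).filter (fun k => v = chatF x k) =
      (Finset.range (N + 1)).filter (fun k => v ≤ chatF x k) \
      (Finset.range (N + 1)).filter (fun k => v + 1 ≤ chatF x k) := by
    ext k
    simp only [Finset.mem_filter, Finset.mem_sdiff, Finset.mem_range]
    constructor
    · intro h; exact ⟨⟨h.1, by omega⟩, by push_neg; intro _; omega⟩
    · intro h
      have h2 := h.2
      push_neg at h2
      exact ⟨h.1.1, by have := h2 h.1.1; omega⟩
  have hcard : (chatMS x).count v = b - a := by
    rw [hcount, hsetv, Finset.card_sdiff_of_subset]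
    intro k hk
    rw [Finset.mem_filter] at hk ⊢
    exact ⟨hk.1, by omega⟩
  rcases Nat.eq_or_lt_of_le hab with heq | hlt
  · rw [hcard, ← heq]
    simp
  -- a < b
  have hblt : ∀ k, k < b → v ≤ chatF x k := by
    intro k hk
    have : k ∈ (Finset.range (N + 1)).filter (fun k => v ≤ chatF x k) := by
      rw [hDCb]; exact Finset.mem_range.mpr hk
    exact (Finset.mem_filter.mp this).2
  have hbN : b ≤ N + 1 := by
    rw [hbdef]
    calc ((Finset.range (N + 1)).filter _).card ≤ (Finset.range (N + 1)).card :=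
      Finset.card_le_card (Finset.filter_subset _ _)
    _ = N + 1 := Finset.card_range _
  have hage : ∀ k, a ≤ k → k ≤ N → chatF x k ≤ v := by
    intro k hk hkN
    by_contra hcon
    have : k ∈ (Finset.range (N + 1)).filter (fun k => v + 1 ≤ chatF x k) := by
      rw [Finset.mem_filter, Finset.mem_range]
      exact ⟨by omega, by omega⟩
    rw [hDCa, Finset.mem_range] at this
    omega
  have hbge : ∀ k, b ≤ k → chatF x k < v := by
    intro k hk
    by_cases hkN : k ≤ N
    · by_contra hcon
      have : k ∈ (Finset.range (N + 1)).filter (fun k => v ≤ chatF x k) := by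
        rw [Finset.mem_filter, Finset.mem_range]
        exact ⟨by omega, by omega⟩
      rw [hDCb, Finset.mem_range] at this
      omega
    · rw [JW_chat_zero x heven k (by omega)]
      omega
  -- parity claim at a position m (either 0 or a corner)
  have hparity : ∀ m, (m = 0 ∨ chatF x m < chatF x (m - 1) ∧ 1 ≤ m) →
      (GF x m + epsF x m + m) % 2 = 0 := by
    intro m hm
    rcases hm with hm0 | ⟨hcor, hm1⟩
    · subst hm0
      rw [JW_eps0 x horth heven]
      simp [GF]
    · obtain ⟨i, rfl⟩ : ∃ i, m = i + 1 := ⟨m - 1, by omega⟩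
      exact JW_chat_corner x horth heven i (by simpa using hcor)
  have hpb : (GF x b + epsF x b + b) % 2 = 0 := by
    apply hparity
    right
    have h1 : 1 ≤ b := by omega
    obtain ⟨i, hib⟩ : ∃ i, b = i + 1 := ⟨b - 1, by omega⟩
    constructor
    · have hc1 : v ≤ chatF x (b - 1) := hblt (b - 1) (by omega)
      have hc2 : chatF x b < v := hbge b le_rfl
      omega
    · omega
  have hpa : (GF x a + epsF x a + a) % 2 = 0 := by
    apply hparity
    rcases Nat.eq_zero_or_pos a with ha0 | hapos
    · left; exact ha0
    · right
      refine ⟨?_, by omega⟩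
      have hc1 : v + 1 ≤ chatF x (a - 1) := by
        have : a - 1 ∈ (Finset.range (N + 1)).filter (fun k => v + 1 ≤ chatF x k) := by
          rw [hDCa]; exact Finset.mem_range.mpr (by omega)
        exact (Finset.mem_filter.mp this).2
      have hc2 : chatF x a ≤ v := hage a le_rfl (by omega)
      omega
  -- telescoping sums
  have hta := JW_tele x a
  have htb := JW_tele x b
  rw [JW_eps0 x horth heven] at hta htb
  have hIco : ∀ k ∈ Finset.Ico a b, chatF x k = v := by
    intro k hk
    rw [Finset.mem_Ico] at hk
    have h1 := hblt k hk.2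
    have h2 := hage k hk.1 (by omega)
    omega
  have h5 : ∑ k ∈ Finset.Ico a b, chatF x k = v * (b - a) := by
    rw [Finset.sum_congr rfl hIco, Finset.sum_const, Nat.card_Ico, smul_eq_mul, Nat.mul_comm]
  have h6 : ∑ k ∈ Finset.range a, chatF x k + ∑ k ∈ Finset.Ico a b, chatF x k
      = ∑ k ∈ Finset.range b, chatF x k := by
    rw [Finset.range_eq_Ico, Finset.range_eq_Ico]
    exact Finset.sum_Ico_consecutive (chatF x) (Nat.zero_le a) (le_of_lt hlt)
  have hw : (v * (b - a)) % 2 = 0 := by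
    rw [Nat.mul_mod, hv]
    simp
  have hea := JW_eps_le_one x a
  have heb := JW_eps_le_one x b
  rw [hcard, Nat.even_iff]
  omega

lemma JW_chatMS_rowfn (x : Multiset ℕ) (horth : IsOrthogonal x) (heven : x.sum % 2 = 0) :
    RowFn (chatMS x) (chatF x) := by
  refine ⟨JW_chatMS_pos x, JW_chat_anti x, ?_, ?_⟩
  · intro k
    rw [JW_chatMS_sum' x horth heven]
    exact JW_chat_le_sum x horth heven k
  · intro i hi
    rw [JW_chatMS_count x i hi, JW_chatMS_sum' x horth heven]

end JWChatMS

section JWTranspose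

open Finset

lemma JW_le_maxPart {x : Multiset ℕ} {a : ℕ} (h : a ∈ x) : a ≤ maxPart x :=
  Multiset.le_sup h

lemma JW_maxPart_le_sum (x : Multiset ℕ) : maxPart x ≤ x.sum := by
  rw [maxPart]
  apply Multiset.sup_le.mpr
  intro a ha
  exact JW_mem_le_sum ha

lemma JW_exists_ge (x : Multiset ℕ) (w : ℕ) (h1 : 1 ≤ w) (h2 : w ≤ maxPart x) :
    ∃ a ∈ x, w ≤ a := by
  induction x using Multiset.induction with
  | empty => rw [maxPart] at h2; simp at h2; omega
  | cons a y ih =>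
    rw [maxPart, Multiset.sup_cons] at h2
    by_cases hwa : w ≤ a
    · exact ⟨a, Multiset.mem_cons_self a y, hwa⟩
    · have : w ≤ maxPart y := by
        rw [maxPart]
        have := le_max_iff.mp h2
        rcases this with h | h
        · omega
        · exact h
      obtain ⟨b, hb, hwb⟩ := ih this
      exact ⟨b, Multiset.mem_cons_of_mem hb, hwb⟩

lemma JW_g_zero_of_ge (x : Multiset ℕ) (k : ℕ) (hk : maxPart x ≤ k) : gF x k = 0 := by
  rw [gF, sCount, Multiset.card_eq_zero, Multiset.filter_eq_nil]
  intro a ha hle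
  have := JW_le_maxPart ha
  omega

lemma JW_g_pos (x : Multiset ℕ) (k : ℕ) (hk : k < maxPart x) : 1 ≤ gF x k := by
  obtain ⟨a, ha, hwa⟩ := JW_exists_ge x (k + 1) (by omega) (by omega)
  rw [gF, sCount]
  have : a ∈ x.filter (fun b => k + 1 ≤ b) := Multiset.mem_filter.mpr ⟨ha, hwa⟩
  have := Multiset.card_pos_iff_exists_mem.mpr ⟨a, this⟩
  omega

lemma JW_transpose_sum (x : Multiset ℕ) : (transpose x).sum = x.sum := by
  rw [transpose]
  have h1 : ((Multiset.range (maxPart x)).map (fun i => sCount x (i + 1))).sum =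
      ∑ k ∈ Finset.range (maxPart x), gF x k := rfl
  rw [h1]
  have h2 : (∑ k ∈ Finset.range (maxPart x), gF x k) = GF x (maxPart x) := rfl
  rw [h2, JW_GF_Icc]
  exact JW_sum_sCount_Icc x (maxPart x) (fun a ha => JW_le_maxPart ha)

lemma JW_transpose_count (x : Multiset ℕ) (i : ℕ) (hi : 1 ≤ i) :
    sCount (transpose x) i =
      ((Finset.range (maxPart x)).filter (fun k => i ≤ gF x k)).card := by
  rw [sCount, transpose, ← Multiset.countP_eq_card_filter, Multiset.countP_map,
    ← Multiset.countP_eq_card_filter]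
  exact JW_countP_range (fun k => i ≤ gF x k) (maxPart x)

lemma JW_transpose_rowfn (x : Multiset ℕ) (hpos : ∀ a ∈ x, 0 < a) :
    RowFn (transpose x) (gF x) := by
  have htsum := JW_transpose_sum x
  refine ⟨?_, ?_, ?_, ?_⟩
  · intro a ha
    rw [transpose] at ha
    obtain ⟨k, hk, rfl⟩ := Multiset.mem_map.mp ha
    rw [Multiset.mem_range] at hk
    exact JW_g_pos x k hk
  · intro k k' hkk
    exact JW_sCount_anti x (by omega)
  · intro k
    rw [htsum]
    calc gF x k ≤ Multiset.card x := JW_sCount_le_card x (k + 1)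
    _ ≤ x.sum := JW_card_le_sum hpos
  · intro i hi
    rw [htsum, JW_transpose_count x i hi]
    congr 1
    ext k
    simp only [Finset.mem_filter, Finset.mem_range]
    constructor
    · intro h
      refine ⟨?_, h.2⟩
      have := JW_maxPart_le_sum x
      omega
    · intro h
      refine ⟨?_, h.2⟩
      by_contra hcon
      have := JW_g_zero_of_ge x k (by omega)
      omega

end JWTranspose

section JWMaster

open Finset

lemma JW_master (x c : Multiset ℕ) (hpos : ∀ a ∈ x, 0 < a) (horth : IsOrthogonal x)
    (heven : x.sum % 2 = 0) (hc : IsSOCollapse (transpose x) c) :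
    ∀ m, topSum c m + epsF x m = GF x m := by
  obtain ⟨⟨hcpos, hcsum⟩, hcorth, hcdom, hcmax⟩ := hc
  have htsum : (transpose x).sum = x.sum := JW_transpose_sum x
  have hTrow := JW_transpose_rowfn x hpos
  have hTtop : ∀ m, topSum (transpose x) m = GF x m := fun m => JW_bridge hTrow m
  have hcsum' : c.sum = x.sum := by rw [hcsum, htsum]
  have hdom : ∀ m, topSum c m ≤ GF x m := by
    intro m
    have := hcdom m
    rw [hTtop m] at this
    exact this
  have hchatrow := JW_chatMS_rowfn x horth heven
  have hchattop : ∀ m, topSum (chatMS x) m + epsF x m = GF x m := by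
    intro m
    rw [JW_bridge hchatrow m]
    have := JW_tele x m
    rw [JW_eps0 x horth heven] at this
    omega
  have hchatdom : domLE (chatMS x) (transpose x) := by
    intro m
    rw [hTtop m]
    have := hchattop m
    omega
  have hmax := hcmax (chatMS x)
    ⟨JW_chatMS_pos x, by rw [JW_chatMS_sum' x horth heven, htsum]⟩
    (JW_chatMS_orth x horth heven) hchatdom
  intro m
  have h1 : topSum (chatMS x) m ≤ topSum c m := hmax m
  have h2 : topSum c m + epsF x m ≤ GF x m := by
    by_cases he : epsF x m = 1
    · have := JW_thmU x c horth heven hcorth hcpos hcsum' hdom m he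
      omega
    · have he0 : epsF x m = 0 := by have := JW_eps_le_one x m; omega
      have := hdom m
      omega
  have h3 := hchattop m
  omega

lemma JW_c_rowfn (x c : Multiset ℕ) (hpos : ∀ a ∈ x, 0 < a) (horth : IsOrthogonal x)
    (heven : x.sum % 2 = 0) (hc : IsSOCollapse (transpose x) c) :
    RowFn c (chatF x) := by
  have hmaster := JW_master x c hpos horth heven hc
  obtain ⟨⟨hcpos, hcsum⟩, hcorth, hcdom, hcmax⟩ := hc
  have hcsum' : c.sum = x.sum := by rw [hcsum, JW_transpose_sum x]
  have hrow0 := JW_rowfn_exists c hcpos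
  set f₀ : ℕ → ℕ := fun k => ((Finset.Icc 1 c.sum).filter (fun i => k + 1 ≤ sCount c i)).card
    with hf₀
  have htop : ∀ m, topSum c m = ∑ k ∈ Finset.range m, chatF x k := by
    intro m
    have h1 := hmaster m
    have h2 := JW_tele x m
    rw [JW_eps0 x horth heven] at h2
    omega
  have hpoint : ∀ k, f₀ k = chatF x k := by
    intro k
    have h1 := JW_rowfn_succ hrow0 k
    have h2 := htop (k + 1)
    have h3 := htop k
    rw [Finset.sum_range_succ] at h2
    omega
  refine ⟨hcpos, JW_chat_anti x, ?_, ?_⟩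
  · intro k
    rw [← hpoint k]
    exact hrow0.2.2.1 k
  · intro i hi
    rw [hrow0.2.2.2 i hi]
    congr 1
    apply Finset.filter_congr
    intro k _
    rw [hpoint k]

end JWMaster


section JWDim

open Finset

lemma JW_minsum (f : ℕ → ℕ) (hf : Antitone f) (M : ℕ) :
    ∑ k ∈ Finset.range M, ∑ l ∈ Finset.range M, min (f k) (f l) =
      ∑ k ∈ Finset.range M, (2 * k + 1) * f k := by
  induction M with
  | zero => simp
  | succ M ih =>
    rw [Finset.sum_range_succ]
    have h1 : ∀ k ∈ Finset.range M, ∑ l ∈ Finset.range (M + 1), min (f k) (f l) =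
        (∑ l ∈ Finset.range M, min (f k) (f l)) + f M := by
      intro k hk
      rw [Finset.sum_range_succ]
      congr 1
      exact min_eq_right (hf (le_of_lt (Finset.mem_range.mp hk)))
    rw [Finset.sum_congr rfl h1, Finset.sum_add_distrib, Finset.sum_const, ih]
    have h2 : ∑ l ∈ Finset.range (M + 1), min (f M) (f l) = (M + 1) * f M := by
      have hc : ∀ l ∈ Finset.range (M + 1), min (f M) (f l) = f M := by
        intro l hl
        exact min_eq_left (hf (by have := Finset.mem_range.mp hl; omega))
      rw [Finset.sum_congr rfl hc, Finset.sum_const, Finset.card_range, smul_eq_mul]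
    rw [h2, Finset.sum_range_succ, Finset.card_range, smul_eq_mul]
    ring

lemma JW_sq_sum (x : Multiset ℕ) (f : ℕ → ℕ) (hrow : RowFn x f) :
    ∑ i ∈ Icc 1 x.sum, (sCount x i) ^ 2 =
      ∑ k ∈ Finset.range (x.sum + 1), (2 * k + 1) * f k := by
  have hcnt := hrow.2.2.2
  have hle := hrow.2.2.1
  calc ∑ i ∈ Icc 1 x.sum, (sCount x i) ^ 2
      = ∑ i ∈ Icc 1 x.sum, ∑ k ∈ Finset.range (x.sum + 1), ∑ l ∈ Finset.range (x.sum + 1),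
          (if i ≤ min (f k) (f l) then 1 else 0) := by
        apply Finset.sum_congr rfl
        intro i hi
        rw [hcnt i (Finset.mem_Icc.mp hi).1, sq, Finset.card_filter, Finset.sum_mul_sum]
        apply Finset.sum_congr rfl
        intro k _
        apply Finset.sum_congr rfl
        intro l _
        have hm : i ≤ min (f k) (f l) ↔ i ≤ f k ∧ i ≤ f l := le_min_iff
        by_cases h1 : i ≤ f k <;> by_cases h2 : i ≤ f l <;> simp [h1, h2, hm]
    _ = ∑ k ∈ Finset.range (x.sum + 1), ∑ l ∈ Finset.range (x.sum + 1),
          ∑ i ∈ Icc 1 x.sum, (if i ≤ min (f k) (f l) then 1 else 0) := by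
        rw [Finset.sum_comm]
        apply Finset.sum_congr rfl
        intro k _
        rw [Finset.sum_comm]
    _ = ∑ k ∈ Finset.range (x.sum + 1), ∑ l ∈ Finset.range (x.sum + 1), min (f k) (f l) := by
        apply Finset.sum_congr rfl
        intro k _
        apply Finset.sum_congr rfl
        intro l _
        rw [Finset.sum_boole]
        have hmin : min (f k) (f l) ≤ x.sum := le_trans (min_le_left _ _) (hle k)
        have hset : Finset.filter (fun i => i ≤ min (f k) (f l)) (Icc 1 x.sum) =
            Icc 1 (min (f k) (f l)) := by
          ext i
          simp only [Finset.mem_filter, Finset.mem_Icc]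
          omega
        rw [hset]
        simp [Nat.card_Icc]
    _ = ∑ k ∈ Finset.range (x.sum + 1), (2 * k + 1) * f k :=
        JW_minsum f hrow.2.1 (x.sum + 1)

lemma JW_rCount_card (x : Multiset ℕ) (f : ℕ → ℕ) (hrow : RowFn x f) (i : ℕ) (hi : 1 ≤ i) :
    rCount x i = ((Finset.range (x.sum + 1)).filter (fun k => f k = i)).card := by
  have hcnt := hrow.2.2.2
  have hsplit := JW_sCount_split x i
  have hsub : (Finset.range (x.sum + 1)).filter (fun k => i + 1 ≤ f k) ⊆
      (Finset.range (x.sum + 1)).filter (fun k => i ≤ f k) := by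
    intro k hk
    rw [Finset.mem_filter] at hk ⊢
    exact ⟨hk.1, by omega⟩
  have hset : (Finset.range (x.sum + 1)).filter (fun k => f k = i) =
      (Finset.range (x.sum + 1)).filter (fun k => i ≤ f k) \
      (Finset.range (x.sum + 1)).filter (fun k => i + 1 ≤ f k) := by
    ext k
    simp only [Finset.mem_filter, Finset.mem_sdiff]
    constructor
    · intro h
      exact ⟨⟨h.1, by omega⟩, by push_neg; intro _; omega⟩
    · intro h
      have h2 := h.2
      push_neg at h2
      exact ⟨h.1.1, by have := h2 h.1.1; omega⟩
  rw [hset, Finset.card_sdiff_of_subset hsub, ← hcnt i hi, ← hcnt (i + 1) (by omega)]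
  omega

lemma JW_oddrow (x : Multiset ℕ) (f : ℕ → ℕ) (hrow : RowFn x f) :
    ∑ i ∈ Icc 1 x.sum, (if i % 2 = 1 then rCount x i else 0) =
      ((Finset.range (x.sum + 1)).filter (fun k => f k % 2 = 1)).card := by
  have hle := hrow.2.2.1
  calc ∑ i ∈ Icc 1 x.sum, (if i % 2 = 1 then rCount x i else 0)
      = ∑ i ∈ Icc 1 x.sum, ∑ k ∈ Finset.range (x.sum + 1),
          (if i % 2 = 1 ∧ f k = i then 1 else 0) := by
        apply Finset.sum_congr rfl
        intro i hi
        by_cases hodd : i % 2 = 1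
        · rw [if_pos hodd, JW_rCount_card x f hrow i (Finset.mem_Icc.mp hi).1,
            Finset.card_filter]
          apply Finset.sum_congr rfl
          intro k _
          simp [hodd]
        · rw [if_neg hodd]
          symm
          apply Finset.sum_eq_zero
          intro k _
          rw [if_neg]
          intro hcon
          exact hodd hcon.1
    _ = ∑ k ∈ Finset.range (x.sum + 1), ∑ i ∈ Icc 1 x.sum,
          (if i % 2 = 1 ∧ f k = i then 1 else 0) := Finset.sum_comm
    _ = ∑ k ∈ Finset.range (x.sum + 1), (if f k % 2 = 1 then 1 else 0) := by
        apply Finset.sum_congr rfl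
        intro k _
        by_cases hodd : f k % 2 = 1
        · rw [if_pos hodd]
          rw [Finset.sum_eq_single (f k)]
          · simp [hodd]
          · intro i _ hne
            rw [if_neg]
            intro hcon
            exact hne hcon.2.symm
          · intro hnotmem
            exfalso
            apply hnotmem
            rw [Finset.mem_Icc]
            have := hle k
            omega
        · rw [if_neg hodd]
          apply Finset.sum_eq_zero
          intro i _
          rw [if_neg]
          intro hcon
          rw [hcon.2] at hodd
          exact hodd hcon.1
    _ = ((Finset.range (x.sum + 1)).filter (fun k => f k % 2 = 1)).card := by
        rw [Finset.sum_boole]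
        simp

lemma JW_dimD_formula (x : Multiset ℕ) (f : ℕ → ℕ) (hrow : RowFn x f) :
    dimD x = ((x.sum : ℚ) ^ 2 - x.sum) / 2
      - ((∑ k ∈ Finset.range (x.sum + 1), (2 * k + 1) * f k : ℕ) : ℚ) / 2
      + (((Finset.range (x.sum + 1)).filter (fun k => f k % 2 = 1)).card : ℚ) / 2 := by
  rw [dimD]
  have h1 : (∑ i ∈ Icc 1 x.sum, (sCount x i : ℚ) ^ 2) =
      ((∑ i ∈ Icc 1 x.sum, (sCount x i) ^ 2 : ℕ) : ℚ) := by
    push_cast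
    rfl
  have h2 : (∑ i ∈ Icc 1 x.sum, if i % 2 = 1 then (rCount x i : ℚ) else 0) =
      ((∑ i ∈ Icc 1 x.sum, if i % 2 = 1 then rCount x i else 0 : ℕ) : ℚ) := by
    push_cast
    rfl
  rw [h1, h2, JW_sq_sum x f hrow, JW_oddrow x f hrow]

end JWDim


section JWFinal

open Finset

lemma JW_parts (x : Multiset ℕ) (h0 : epsF x 0 = 0) (M : ℕ) :
    ∑ k ∈ Finset.range M, (2 * k + 1) * chatF x k + (2 * M - 1) * epsF x M =
      ∑ k ∈ Finset.range M, (2 * k + 1) * gF x k + 2 * ∑ k ∈ Finset.range M, epsF x k := by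
  induction M with
  | zero => simp
  | succ M ih =>
    rw [Finset.sum_range_succ, Finset.sum_range_succ,
      Finset.sum_range_succ (f := fun k => epsF x k)]
    have i1 := JW_eps_succ_le x M
    rcases Nat.eq_zero_or_pos M with rfl | hM1
    · simp only [Finset.sum_range_zero]
      have i1' : epsF x (0 + 1) ≤ gF x 0 + epsF x 0 := JW_eps_succ_le x 0
      have hc : chatF x 0 + epsF x (0 + 1) = gF x 0 + epsF x 0 := by
        rw [chatF]; omega
      omega
    · have hkey : (2 * M + 1) * chatF x M + (2 * M + 1) * epsF x (M + 1) =
          (2 * M + 1) * gF x M + (2 * M + 1) * epsF x M := by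
        have h : chatF x M + epsF x (M + 1) = gF x M + epsF x M := by
          rw [chatF]; omega
        calc (2 * M + 1) * chatF x M + (2 * M + 1) * epsF x (M + 1)
            = (2 * M + 1) * (chatF x M + epsF x (M + 1)) := by ring
          _ = (2 * M + 1) * (gF x M + epsF x M) := by rw [h]
          _ = (2 * M + 1) * gF x M + (2 * M + 1) * epsF x M := by ring
      have hb1 : (2 * (M + 1) - 1) * epsF x (M + 1) = (2 * M + 1) * epsF x (M + 1) := by
        have h21 : 2 * (M + 1) - 1 = 2 * M + 1 := by omega
        rw [h21]
      have hb2 : (2 * M + 1) * epsF x M = (2 * M - 1) * epsF x M + 2 * epsF x M := by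
        rcases (by have := JW_eps_le_one x M; omega : epsF x M = 0 ∨ epsF x M = 1) with h | h
        · rw [h]; simp
        · rw [h, Nat.mul_one, Nat.mul_one, Nat.mul_one]; omega
      omega

lemma JW_eps_zero_of_gt (x : Multiset ℕ) (k : ℕ) (hk : x.sum < k) : epsF x k = 0 := by
  apply JW_eps_zero
  by_contra hne
  have h2 : 0 < Multiset.card ((oddF x).filter (fun a => k ≤ a)) := by
    rw [sCount] at hne; omega
  obtain ⟨a, ha⟩ := Multiset.card_pos_iff_exists_mem.mp h2
  rw [Multiset.mem_filter] at ha
  have hle : a ≤ x.sum := JW_mem_le_sum (Multiset.mem_of_mem_filter ha.1)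
  omega

lemma JW_final_piece (x c : Multiset ℕ) (hpos : ∀ a ∈ x, 0 < a) (horth : IsOrthogonal x)
    (heven : x.sum % 2 = 0) (hc : IsSOCollapse (transpose x) c) (M : ℕ) (hM : x.sum < M) :
    ((x.sum : ℚ) ^ 2 - x.sum) / 2 - dimD c =
      ((∑ k ∈ Finset.range M, (2 * k + 1) * gF x k : ℕ) : ℚ) / 2
      + ((∑ k ∈ Finset.range M, epsF x k : ℕ) : ℚ)
      - (((Finset.range M).filter (fun k => chatF x k % 2 = 1)).card : ℚ) / 2 := by
  have hrow := JW_c_rowfn x c hpos horth heven hc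
  have hcsum : c.sum = x.sum := by rw [hc.1.2, JW_transpose_sum x]
  have hform := JW_dimD_formula c (chatF x) hrow
  rw [hcsum] at hform
  have hz : ∀ k, x.sum + 1 ≤ k → chatF x k = 0 := fun k hk =>
    JW_chat_zero x heven k (by omega)
  have hE1 : ∑ k ∈ Finset.range (x.sum + 1), (2 * k + 1) * chatF x k =
      ∑ k ∈ Finset.range M, (2 * k + 1) * chatF x k := by
    apply Finset.sum_subset (Finset.range_subset_range.mpr (by omega))
    intro k _ hk
    rw [Finset.mem_range] at hk
    push_neg at hk
    rw [hz k (by omega), Nat.mul_zero]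
  have hE2 : ((Finset.range (x.sum + 1)).filter (fun k => chatF x k % 2 = 1)).card =
      ((Finset.range M).filter (fun k => chatF x k % 2 = 1)).card := by
    congr 1
    ext k
    simp only [Finset.mem_filter, Finset.mem_range]
    constructor
    · intro h
      exact ⟨by omega, h.2⟩
    · intro h
      refine ⟨?_, h.2⟩
      by_contra hcon
      have h0 := hz k (by omega)
      rw [h0] at h
      omega
  rw [hE1, hE2] at hform
  have hparts := JW_parts x (JW_eps0 x horth heven) M
  rw [JW_eps_zero_of_gt x M hM, Nat.mul_zero, Nat.add_zero] at hparts
  have hparts' : ((∑ k ∈ Finset.range M, (2 * k + 1) * chatF x k : ℕ) : ℚ) =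
      ((∑ k ∈ Finset.range M, (2 * k + 1) * gF x k : ℕ) : ℚ)
      + 2 * ((∑ k ∈ Finset.range M, epsF x k : ℕ) : ℚ) := by
    exact_mod_cast hparts
  rw [hform, hparts']
  ring

end JWFinal

/-- the `SO_{2n}` case of the dimension identity for nilpotent orbits.
`p` is an orthogonal partition of `2n`, `q` (resp. `s`) its odd-part (resp. even-part)
subpartition, with `|q| = 2n₁`, `|s| = 2n₂`.  `c` is the `SO_{2n}`-collapse of `p^t`
(the Barbasch–Vogan dual of `p`), `cq` the `SO_{2n₁}`-collapse of `q^t`, and `cs` the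
`SO_{2n₂}`-collapse of `s^t`. -/
theorem dimension_identity_SO_even (n n₁ n₂ : ℕ) (p : Multiset ℕ)
    (hp : IsPartitionOf p (2 * n)) (horth : IsOrthogonal p)
    (hq : (p.filter fun a => a % 2 = 1).sum = 2 * n₁)
    (hs : (p.filter fun a => a % 2 = 0).sum = 2 * n₂)
    (c cq cs : Multiset ℕ)
    (hc : IsSOCollapse (transpose p) c)
    (hcq : IsSOCollapse (transpose (p.filter fun a => a % 2 = 1)) cq)
    (hcs : IsSOCollapse (transpose (p.filter fun a => a % 2 = 0)) cs) :
    (2 * (n : ℚ) ^ 2 - n) - dimD c =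
      (2 * (n₁ : ℚ) ^ 2 - n₁) + (2 * (n₂ : ℚ) ^ 2 - n₂) - dimD cq - dimD cs := by
  have hppos : ∀ a ∈ p, 0 < a := hp.1
  have hqpos : ∀ a ∈ p.filter (fun a => a % 2 = 1), 0 < a := fun a ha =>
    hp.1 a (Multiset.mem_of_mem_filter ha)
  have hspos : ∀ a ∈ p.filter (fun a => a % 2 = 0), 0 < a := fun a ha =>
    hp.1 a (Multiset.mem_of_mem_filter ha)
  have hqorth : IsOrthogonal (p.filter (fun a => a % 2 = 1)) := by
    intro a ha2
    rw [Multiset.count_filter, if_neg (by omega)]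
    exact Even.zero
  have hsorth : IsOrthogonal (p.filter (fun a => a % 2 = 0)) := by
    intro a ha2
    rw [Multiset.count_filter, if_pos ha2]
    exact horth a ha2
  have hpsum : p.sum = 2 * n := hp.2
  have hpe : p.sum % 2 = 0 := by omega
  have hqe : (p.filter (fun a => a % 2 = 1)).sum % 2 = 0 := by rw [hq]; omega
  have hse : (p.filter (fun a => a % 2 = 0)).sum % 2 = 0 := by rw [hs]; omega
  have hfeq : p.filter (fun a => ¬ a % 2 = 1) = p.filter (fun a => a % 2 = 0) :=
    Multiset.filter_congr (fun a _ => by omega)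
  have hps : p.filter (fun a => a % 2 = 1) + p.filter (fun a => a % 2 = 0) = p := by
    rw [← hfeq]
    exact Multiset.filter_add_not _ p
  have hsum_split : (p.filter (fun a => a % 2 = 1)).sum +
      (p.filter (fun a => a % 2 = 0)).sum = p.sum := by
    rw [← Multiset.sum_add, hps]
  set M := 2 * n + 1 with hMdef
  have P1 := JW_final_piece p c hppos horth hpe hc M (by omega)
  have P2 := JW_final_piece (p.filter (fun a => a % 2 = 1)) cq hqpos hqorth hqe hcq M
    (by rw [hq]; omega)
  have P3 := JW_final_piece (p.filter (fun a => a % 2 = 0)) cs hspos hsorth hse hcs M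
    (by rw [hs]; omega)
  -- pointwise identities
  have hgadd : ∀ k, gF p k =
      gF (p.filter (fun a => a % 2 = 1)) k + gF (p.filter (fun a => a % 2 = 0)) k := by
    intro k
    have h1 : gF (p.filter (fun a => a % 2 = 1) + p.filter (fun a => a % 2 = 0)) k =
        gF (p.filter (fun a => a % 2 = 1)) k + gF (p.filter (fun a => a % 2 = 0)) k := by
      rw [gF, gF, gF, sCount, sCount, sCount, Multiset.filter_add, Multiset.card_add]
    rw [← h1, hps]
  have hoddqp : oddF (p.filter (fun a => a % 2 = 1)) = oddF p := by
    rw [oddF, oddF, Multiset.filter_filter]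
    exact Multiset.filter_congr (fun a _ => by omega)
  have hepsq : ∀ k, epsF (p.filter (fun a => a % 2 = 1)) k = epsF p k := by
    intro k
    rw [epsF, epsF, hoddqp]
  have hepss : ∀ k, epsF (p.filter (fun a => a % 2 = 0)) k = 0 := by
    intro k
    apply JW_eps_zero
    have hodds : oddF (p.filter (fun a => a % 2 = 0)) = 0 := by
      rw [oddF, Multiset.filter_filter]
      exact Multiset.filter_eq_nil.mpr (fun a _ h => by omega)
    rw [hodds]
    exact JW_sCount_zero k
  have hseven : ∀ k, gF (p.filter (fun a => a % 2 = 0)) k % 2 = 0 := by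
    intro k
    rw [gF, sCount]
    apply JW_even_card
    intro v
    rw [Multiset.count_filter]
    split_ifs with h
    · rw [Multiset.count_filter]
      split_ifs with h2
      · exact horth v h2
      · exact Even.zero
    · exact Even.zero
  have hchatpar : ∀ k, chatF p k % 2 = chatF (p.filter (fun a => a % 2 = 1)) k % 2 := by
    intro k
    have i1p := JW_eps_succ_le p k
    have i1q := JW_eps_succ_le (p.filter (fun a => a % 2 = 1)) k
    have h1 := hgadd k
    have h2 := hepsq k
    have h3 := hepsq (k + 1)
    have h4 := hseven k
    rw [chatF, chatF]
    omega
  -- summed identities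
  have hA : ∑ k ∈ Finset.range M, (2 * k + 1) * gF p k =
      ∑ k ∈ Finset.range M, (2 * k + 1) * gF (p.filter (fun a => a % 2 = 1)) k +
      ∑ k ∈ Finset.range M, (2 * k + 1) * gF (p.filter (fun a => a % 2 = 0)) k := by
    rw [← Finset.sum_add_distrib]
    apply Finset.sum_congr rfl
    intro k _
    rw [hgadd k, Nat.mul_add]
  have hE : ∑ k ∈ Finset.range M, epsF (p.filter (fun a => a % 2 = 1)) k =
      ∑ k ∈ Finset.range M, epsF p k :=
    Finset.sum_congr rfl (fun k _ => hepsq k)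
  have hEs : ∑ k ∈ Finset.range M, epsF (p.filter (fun a => a % 2 = 0)) k = 0 :=
    Finset.sum_eq_zero (fun k _ => hepss k)
  have hC : ((Finset.range M).filter (fun k => chatF p k % 2 = 1)).card =
      ((Finset.range M).filter
        (fun k => chatF (p.filter (fun a => a % 2 = 1)) k % 2 = 1)).card := by
    congr 1
    apply Finset.filter_congr
    intro k _
    have := hchatpar k
    constructor <;> intro h <;> omega
  have hCs : ((Finset.range M).filter
      (fun k => chatF (p.filter (fun a => a % 2 = 0)) k % 2 = 1)).card = 0 := by
    rw [Finset.card_eq_zero, Finset.filter_eq_empty_iff]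
    intro k _
    have h4 := hseven k
    have h5 := hepss k
    have h6 := hepss (k + 1)
    rw [chatF, h5, h6]
    omega
  -- cast the quadratic prefactors
  have hpcast : (p.sum : ℚ) = 2 * (n : ℚ) := by exact_mod_cast hpsum
  have hqcast : ((p.filter (fun a => a % 2 = 1)).sum : ℚ) = 2 * (n₁ : ℚ) := by
    exact_mod_cast hq
  have hscast : ((p.filter (fun a => a % 2 = 0)).sum : ℚ) = 2 * (n₂ : ℚ) := by
    exact_mod_cast hs
  rw [hpcast, show ((2 * (n : ℚ)) ^ 2 - 2 * (n : ℚ)) / 2 = 2 * (n : ℚ) ^ 2 - n from by ring]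
    at P1
  rw [hqcast, show ((2 * (n₁ : ℚ)) ^ 2 - 2 * (n₁ : ℚ)) / 2 = 2 * (n₁ : ℚ) ^ 2 - n₁ from by
    ring] at P2
  rw [hscast, show ((2 * (n₂ : ℚ)) ^ 2 - 2 * (n₂ : ℚ)) / 2 = 2 * (n₂ : ℚ) ^ 2 - n₂ from by
    ring] at P3
  -- cast the ℕ-sum identities
  have hA' : ((∑ k ∈ Finset.range M, (2 * k + 1) * gF p k : ℕ) : ℚ) =
      ((∑ k ∈ Finset.range M, (2 * k + 1) * gF (p.filter (fun a => a % 2 = 1)) k : ℕ) : ℚ) +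
      ((∑ k ∈ Finset.range M, (2 * k + 1) * gF (p.filter (fun a => a % 2 = 0)) k : ℕ) : ℚ) :=
    by exact_mod_cast hA
  have hE' : ((∑ k ∈ Finset.range M, epsF (p.filter (fun a => a % 2 = 1)) k : ℕ) : ℚ) =
      ((∑ k ∈ Finset.range M, epsF p k : ℕ) : ℚ) := by exact_mod_cast hE
  have hEs' : ((∑ k ∈ Finset.range M, epsF (p.filter (fun a => a % 2 = 0)) k : ℕ) : ℚ) = 0 :=
    by exact_mod_cast hEs
  have hC' : (((Finset.range M).filter (fun k => chatF p k % 2 = 1)).card : ℚ) =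
      (((Finset.range M).filter
        (fun k => chatF (p.filter (fun a => a % 2 = 1)) k % 2 = 1)).card : ℚ) := by
    exact_mod_cast hC
  have hCs' : (((Finset.range M).filter
      (fun k => chatF (p.filter (fun a => a % 2 = 0)) k % 2 = 1)).card : ℚ) = 0 := by
    exact_mod_cast hCs
  linarith [P1, P2, P3]

end JiangWF
end

section
/- Let p = [b_1^{a_1} ⋯ b_r^{a_r}] (b_1 ≥ ⋯ ≥ b_r) be an orthogonal partition of 2n+1. Then Σ_{i : b_i odd} a_i is odd, so 2n* = (Σ_{i : b_i odd} a_i) − 1; set P := [p_1 p_1 (2n*)] (the union of two copies of p_1 and one extra part 2n*, omitted if 2n* = 0), which is a symplectic partition of 2n. Then P^{Sp_{2n}} = ((p^-)_{Sp_{2n}})^t if and only if (P^t)_{Sp_{2n}} = (p^-)_{Sp_{2n}}. -/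
namespace JiangWF

/-! ### Basic lemmas on `sCount` -/

lemma sCount_cons (a : ℕ) (p : Multiset ℕ) (i : ℕ) :
    sCount (a ::ₘ p) i = sCount p i + (if i ≤ a then 1 else 0) := by
  simp only [sCount, Multiset.filter_cons]
  split_ifs <;> simp [Nat.add_comm]

lemma sCount_zero (i : ℕ) : sCount (0 : Multiset ℕ) i = 0 := rfl

lemma sCount_le_card (p : Multiset ℕ) (i : ℕ) : sCount p i ≤ Multiset.card p :=
  Multiset.card_le_card (Multiset.filter_le _ p)

lemma sCount_anti (p : Multiset ℕ) {i j : ℕ} (h : i ≤ j) : sCount p j ≤ sCount p i := by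
  apply Multiset.card_le_card
  apply Multiset.monotone_filter_right
  intro a ha; exact le_trans h ha

lemma card_le_sum (p : Multiset ℕ) (hp : ∀ a ∈ p, 0 < a) : Multiset.card p ≤ p.sum := by
  induction p using Multiset.induction_on with
  | empty => simp
  | cons a s ih =>
    simp only [Multiset.card_cons, Multiset.sum_cons]
    have h1 : 0 < a := hp a (Multiset.mem_cons_self a s)
    have h2 := ih (fun b hb => hp b (Multiset.mem_cons_of_mem hb))
    omega

lemma sCount_le_sum (p : Multiset ℕ) {i : ℕ} (hi : 1 ≤ i) : sCount p i ≤ p.sum := by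
  classical
  calc sCount p i ≤ (p.filter (fun a => i ≤ a)).sum := by
        apply card_le_sum
        intro a ha
        have := Multiset.of_mem_filter ha
        omega
    _ ≤ p.sum := by
        obtain ⟨u, hu⟩ := Multiset.le_iff_exists_add.mp (Multiset.filter_le (fun a => i ≤ a) p)
        have h2 := congrArg Multiset.sum hu
        rw [Multiset.sum_add] at h2; omega

lemma mem_le_sum {p : Multiset ℕ} {a : ℕ} (ha : a ∈ p) : a ≤ p.sum :=
  Multiset.single_le_sum (fun b _ => Nat.zero_le b) a ha

lemma maxPart_le_sum (p : Multiset ℕ) : maxPart p ≤ p.sum :=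
  Multiset.sup_le.mpr (fun _ hb => mem_le_sum hb)

lemma sCount_eq_zero_of_gt {p : Multiset ℕ} {i : ℕ} (h : maxPart p < i) : sCount p i = 0 := by
  rw [sCount, Multiset.card_eq_zero, Multiset.filter_eq_nil]
  intro a ha
  have : a ≤ maxPart p := Multiset.le_sup ha
  omega

lemma sCount_pos_iff {p : Multiset ℕ} {i : ℕ} (hi : 1 ≤ i) :
    0 < sCount p i ↔ i ≤ maxPart p := by
  constructor
  · intro h
    rw [sCount, Multiset.card_pos_iff_exists_mem] at h
    obtain ⟨a, ha⟩ := h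
    have := Multiset.of_mem_filter ha
    exact le_trans this (Multiset.le_sup (Multiset.mem_of_mem_filter ha))
  · intro h
    by_contra hc
    push_neg at hc
    interval_cases hs : sCount p i
    by_contra _
    have : maxPart p ≤ i - 1 := by
      rw [maxPart, Multiset.sup_le]
      intro a ha
      by_contra hai
      push_neg at hai
      have : a ∈ p.filter (fun b => i ≤ b) := Multiset.mem_filter_of_mem ha (by omega)
      have : 0 < sCount p i := by
        rw [sCount, Multiset.card_pos_iff_exists_mem]; exact ⟨a, this⟩
      omega
    omega

lemma sCount_split (p : Multiset ℕ) (a : ℕ) :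
    sCount p a = p.count a + sCount p (a + 1) := by
  induction p using Multiset.induction_on with
  | empty => simp [sCount_zero]
  | cons b s ih =>
    rw [sCount_cons, sCount_cons, Multiset.count_cons, ih]
    split_ifs with h1 h2 h3 <;> omega

lemma count_zero_eq_zero {p : Multiset ℕ} (hp : ∀ a ∈ p, 0 < a) : p.count 0 = 0 := by
  rw [Multiset.count_eq_zero]
  intro h
  exact absurd (hp 0 h) (lt_irrefl 0)

/-- Extensionality via `sCount` for multisets of positive numbers. -/
lemma ext_of_sCount {p q : Multiset ℕ} (hp : ∀ a ∈ p, 0 < a) (hq : ∀ a ∈ q, 0 < a)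
    (h : ∀ i, 1 ≤ i → sCount p i = sCount q i) : p = q := by
  ext a
  rcases Nat.eq_zero_or_pos a with rfl | ha
  · rw [count_zero_eq_zero hp, count_zero_eq_zero hq]
  · have h1 := sCount_split p a
    have h2 := sCount_split q a
    have e1 := h a ha
    have e2 := h (a + 1) (by omega)
    omega
/-! ### Transpose lemmas -/

lemma sCount_transpose_eq (p : Multiset ℕ) (j : ℕ) :
    sCount (transpose p) j
      = ((Finset.range (maxPart p)).filter (fun k => j ≤ sCount p (k + 1))).card := by
  rw [sCount, transpose]
  rw [← Multiset.countP_eq_card_filter, Multiset.countP_map]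
  rfl

/-- Galois duality for the transpose. -/
lemma transpose_galois (p : Multiset ℕ) {i j : ℕ} (hi : 1 ≤ i) (hj : 1 ≤ j) :
    i ≤ sCount (transpose p) j ↔ j ≤ sCount p i := by
  rw [sCount_transpose_eq]
  constructor
  · intro h
    by_contra hc
    push_neg at hc
    have hsub : (Finset.range (maxPart p)).filter (fun k => j ≤ sCount p (k + 1))
        ⊆ Finset.range (i - 1) := by
      intro k hk
      rw [Finset.mem_filter] at hk
      rw [Finset.mem_range]
      by_contra hki
      push_neg at hki
      have : sCount p (k + 1) ≤ sCount p i := sCount_anti p (by omega)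
      omega
    have := Finset.card_le_card hsub
    rw [Finset.card_range] at this
    omega
  · intro h
    have hiM : i ≤ maxPart p := (sCount_pos_iff hi).mp (by omega)
    have hsub : Finset.range i ⊆
        (Finset.range (maxPart p)).filter (fun k => j ≤ sCount p (k + 1)) := by
      intro k hk
      rw [Finset.mem_range] at hk
      rw [Finset.mem_filter, Finset.mem_range]
      constructor
      · omega
      · exact le_trans h (sCount_anti p (by omega))
    have := Finset.card_le_card hsub
    rw [Finset.card_range] at this
    omega

lemma transpose_pos (p : Multiset ℕ) : ∀ a ∈ transpose p, 0 < a := by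
  intro a ha
  rw [transpose, Multiset.mem_map] at ha
  obtain ⟨k, hk, rfl⟩ := ha
  rw [Multiset.mem_range] at hk
  exact (sCount_pos_iff (by omega)).mpr (by omega)

lemma filter_range_eq {a B : ℕ} (h : a ≤ B) :
    (Finset.range B).filter (fun k => k + 1 ≤ a) = Finset.range a := by
  ext k
  simp only [Finset.mem_filter, Finset.mem_range]
  omega

lemma sum_ite_le {a B : ℕ} (h : a ≤ B) :
    (∑ k ∈ Finset.range B, if k + 1 ≤ a then 1 else 0) = a := by
  rw [Finset.sum_boole]
  rw [filter_range_eq h, Finset.card_range]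
  simp

lemma sum_sCount_range (p : Multiset ℕ) (B : ℕ) (h : ∀ a ∈ p, a ≤ B) :
    ∑ k ∈ Finset.range B, sCount p (k + 1) = p.sum := by
  induction p using Multiset.induction_on with
  | empty => simp [sCount_zero]
  | cons a s ih =>
    have ha : a ≤ B := h a (Multiset.mem_cons_self a s)
    simp only [sCount_cons, Multiset.sum_cons]
    rw [Finset.sum_add_distrib, ih (fun b hb => h b (Multiset.mem_cons_of_mem hb)),
      sum_ite_le ha]
    omega

lemma transpose_sum (p : Multiset ℕ) : (transpose p).sum = p.sum := by
  have : (transpose p).sum = ∑ k ∈ Finset.range (maxPart p), sCount p (k + 1) := rfl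
  rw [this]
  exact sum_sCount_range p _ (fun a ha => Multiset.le_sup ha)

lemma nat_eq_of_le_iff {x y : ℕ} (h : ∀ i, 1 ≤ i → (i ≤ x ↔ i ≤ y)) : x = y := by
  rcases Nat.eq_zero_or_pos x with hx | hx
  · rcases Nat.eq_zero_or_pos y with hy | hy
    · omega
    · have := (h y (by omega)).mpr (le_refl y); omega
  · rcases Nat.eq_zero_or_pos y with hy | hy
    · have := (h x (by omega)).mp (le_refl x); omega
    · have h1 := (h x (by omega)).mp (le_refl x)
      have h2 := (h y (by omega)).mpr (le_refl y)
      omega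

lemma sCount_transpose_transpose (p : Multiset ℕ) {j : ℕ} (hj : 1 ≤ j) :
    sCount (transpose (transpose p)) j = sCount p j := by
  apply nat_eq_of_le_iff
  intro i hi
  rw [transpose_galois _ hi hj, transpose_galois _ hj hi]

lemma transpose_transpose {p : Multiset ℕ} (hp : ∀ a ∈ p, 0 < a) :
    transpose (transpose p) = p :=
  ext_of_sCount (transpose_pos _) hp (fun _ hi => sCount_transpose_transpose p hi)
/-! ### topSum lemmas -/

lemma Icc_one_eq_Ioc (m : ℕ) : Finset.Icc 1 m = Finset.Ioc 0 m := by
  rw [← Finset.Icc_add_one_left_eq_Ioc, Nat.zero_add]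

lemma sum_Icc_one (B : ℕ) (f : ℕ → ℕ) :
    ∑ i ∈ Finset.Icc 1 B, f i = ∑ k ∈ Finset.range B, f (k + 1) := by
  induction B with
  | zero => simp
  | succ B ih => rw [Finset.sum_Icc_succ_top (by omega), ih, Finset.sum_range_succ]

lemma sum_sCount_Icc (p : Multiset ℕ) (B : ℕ) (h : ∀ a ∈ p, a ≤ B) :
    ∑ i ∈ Finset.Icc 1 B, sCount p i = p.sum := by
  rw [sum_Icc_one]
  exact sum_sCount_range p B h

lemma sum_min_bound (p : Multiset ℕ) (m : ℕ) {B B' : ℕ} (hB : maxPart p ≤ B)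
    (hB' : maxPart p ≤ B') :
    ∑ i ∈ Finset.Icc 1 B, min m (sCount p i) = ∑ i ∈ Finset.Icc 1 B', min m (sCount p i) := by
  have key : ∀ C, maxPart p ≤ C →
      ∑ i ∈ Finset.Icc 1 C, min m (sCount p i)
        = ∑ i ∈ Finset.Icc 1 (maxPart p), min m (sCount p i) := by
    intro C hC
    apply (Finset.sum_subset (Finset.Icc_subset_Icc_right hC) _).symm
    intro x hx hnx
    rw [Finset.mem_Icc] at hx hnx
    have : sCount p x = 0 := sCount_eq_zero_of_gt (by omega)
    simp [this]
  rw [key B hB, key B' hB']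

lemma topSum_eq_bound (p : Multiset ℕ) (m : ℕ) {B : ℕ} (hB : maxPart p ≤ B) :
    topSum p m = ∑ i ∈ Finset.Icc 1 B, min m (sCount p i) :=
  sum_min_bound p m (maxPart_le_sum p) hB

lemma min_eq_sum_ite (m X : ℕ) :
    min m X = ∑ k ∈ Finset.Icc 1 m, if k ≤ X then 1 else 0 := by
  rw [Finset.sum_boole]
  have : (Finset.Icc 1 m).filter (fun k => k ≤ X) = Finset.Icc 1 (min m X) := by
    ext k
    simp only [Finset.mem_filter, Finset.mem_Icc]
    omega
  rw [this]
  simp [Nat.card_Icc]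

/-- `T3`: the top-`m` sum of the transpose is the sum of the first `m` column lengths. -/
lemma topSum_transpose (p : Multiset ℕ) (m : ℕ) :
    topSum (transpose p) m = ∑ k ∈ Finset.Icc 1 m, sCount p k := by
  have h0 : topSum (transpose p) m
      = ∑ i ∈ Finset.Icc 1 p.sum, min m (sCount (transpose p) i) := by
    rw [topSum, transpose_sum]
  rw [h0]
  have h1 : ∀ i ∈ Finset.Icc 1 p.sum, min m (sCount (transpose p) i)
      = ∑ k ∈ Finset.Icc 1 m, if i ≤ sCount p k then 1 else 0 := by
    intro i hi
    rw [Finset.mem_Icc] at hi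
    rw [min_eq_sum_ite]
    apply Finset.sum_congr rfl
    intro k hk
    rw [Finset.mem_Icc] at hk
    congr 1
    simp only [eq_iff_iff]
    exact transpose_galois p (by omega) (by omega)
  rw [Finset.sum_congr rfl h1, Finset.sum_comm]
  apply Finset.sum_congr rfl
  intro k hk
  rw [Finset.mem_Icc] at hk
  rw [← min_eq_sum_ite]
  exact min_eq_right (sCount_le_sum p (by omega))

lemma topSum_parts {p : Multiset ℕ} (hp : ∀ a ∈ p, 0 < a) (m : ℕ) :
    topSum p m = ∑ k ∈ Finset.Icc 1 m, sCount (transpose p) k := by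
  conv_lhs => rw [← transpose_transpose hp]
  exact topSum_transpose (transpose p) m

lemma topSum_succ {p : Multiset ℕ} (hp : ∀ a ∈ p, 0 < a) (m : ℕ) :
    topSum p (m + 1) = topSum p m + sCount (transpose p) (m + 1) := by
  rw [topSum_parts hp, topSum_parts hp, Finset.sum_Icc_succ_top (by omega)]

lemma topSum_zero (p : Multiset ℕ) : topSum p 0 = 0 := by
  rw [topSum]
  simp

lemma topSum_total {p : Multiset ℕ} (hp : ∀ a ∈ p, 0 < a) {m : ℕ}
    (hm : Multiset.card p ≤ m) : topSum p m = p.sum := by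
  rw [topSum]
  have : ∀ i ∈ Finset.Icc 1 p.sum, min m (sCount p i) = sCount p i := by
    intro i hi
    exact min_eq_right (le_trans (sCount_le_card p i) hm)
  rw [Finset.sum_congr rfl this]
  exact sum_sCount_Icc p p.sum (fun a ha => mem_le_sum ha)

lemma domLE_sum_eq {p q : Multiset ℕ} (hp : ∀ a ∈ p, 0 < a) (hq : ∀ a ∈ q, 0 < a)
    (h1 : domLE p q) (h2 : domLE q p) : p.sum = q.sum := by
  have e1 : topSum p (Multiset.card p + Multiset.card q) = p.sum := topSum_total hp (by omega)
  have e2 : topSum q (Multiset.card p + Multiset.card q) = q.sum := topSum_total hq (by omega)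
  have := h1 (Multiset.card p + Multiset.card q)
  have := h2 (Multiset.card p + Multiset.card q)
  omega

/-- Dominance is antisymmetric on partitions. -/
lemma domLE_antisymm {p q : Multiset ℕ} (hp : ∀ a ∈ p, 0 < a) (hq : ∀ a ∈ q, 0 < a)
    (h1 : domLE p q) (h2 : domLE q p) : p = q := by
  have hts : ∀ m, topSum p m = topSum q m := fun m => le_antisymm (h1 m) (h2 m)
  have hsq : transpose p = transpose q := by
    apply ext_of_sCount (transpose_pos p) (transpose_pos q)
    intro i hi
    obtain ⟨m, rfl⟩ : ∃ m, i = m + 1 := ⟨i - 1, by omega⟩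
    have e1 := topSum_succ hp m
    have e2 := topSum_succ hq m
    have := hts m
    have := hts (m + 1)
    omega
  calc p = transpose (transpose p) := (transpose_transpose hp).symm
    _ = transpose (transpose q) := by rw [hsq]
    _ = q := transpose_transpose hq

lemma head_tail_split (p : Multiset ℕ) {m : ℕ} (h2 : m ≤ p.sum) :
    ∑ k ∈ Finset.Icc 1 m, sCount p k + ∑ k ∈ Finset.Ioc m p.sum, sCount p k = p.sum := by
  rw [Icc_one_eq_Ioc, Finset.sum_Ioc_consecutive _ (Nat.zero_le m) h2, ← Icc_one_eq_Ioc]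
  exact sum_sCount_Icc p p.sum (fun a ha => mem_le_sum ha)

/-- Tail sums of column lengths are monotone under dominance. -/
lemma tail_sCount_le {p q : Multiset ℕ} (hs : p.sum = q.sum) (h : domLE p q) (m : ℕ) :
    ∑ k ∈ Finset.Ioc m p.sum, sCount p k ≤ ∑ k ∈ Finset.Ioc m q.sum, sCount q k := by
  rcases Nat.lt_or_ge m p.sum with hm | hm
  swap
  · rw [Finset.Ioc_eq_empty (by omega)]
    simp
  set t := sCount p (m + 1) with ht
  have hsplit : ∀ r : Multiset ℕ, m ≤ r.sum → topSum r t
      = ∑ k ∈ Finset.Icc 1 m, min t (sCount r k) + ∑ k ∈ Finset.Ioc m r.sum, min t (sCount r k) := by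
    intro r hr
    rw [topSum, Icc_one_eq_Ioc, Icc_one_eq_Ioc,
      Finset.sum_Ioc_consecutive _ (Nat.zero_le m) hr]
  have hconst : ∀ r : Multiset ℕ, ∑ _k ∈ Finset.Icc 1 m, t = m * t := by
    intro r
    have hcard : (Finset.Icc 1 m).card = m := by rw [Nat.card_Icc]; omega
    rw [Finset.sum_const, hcard, smul_eq_mul]
  have eP : topSum p t = m * t + ∑ k ∈ Finset.Ioc m p.sum, sCount p k := by
    rw [hsplit p (by omega)]
    have hA : ∑ k ∈ Finset.Icc 1 m, min t (sCount p k) = ∑ _k ∈ Finset.Icc 1 m, t := by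
      apply Finset.sum_congr rfl
      intro k hk
      rw [Finset.mem_Icc] at hk
      exact min_eq_left (sCount_anti p (by omega))
    have hB : ∑ k ∈ Finset.Ioc m p.sum, min t (sCount p k)
        = ∑ k ∈ Finset.Ioc m p.sum, sCount p k := by
      apply Finset.sum_congr rfl
      intro k hk
      rw [Finset.mem_Ioc] at hk
      exact min_eq_right (sCount_anti p (by omega))
    rw [hA, hB, hconst p]
  have eQ : topSum q t ≤ m * t + ∑ k ∈ Finset.Ioc m q.sum, sCount q k := by
    rw [hsplit q (by omega)]
    apply Nat.add_le_add
    · calc ∑ k ∈ Finset.Icc 1 m, min t (sCount q k) ≤ ∑ _k ∈ Finset.Icc 1 m, t :=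
            Finset.sum_le_sum (fun k _ => min_le_left _ _)
        _ = m * t := hconst q
    · exact Finset.sum_le_sum (fun k _ => min_le_right _ _)
  have := h t
  omega

/-- Transposition reverses dominance. -/
lemma domLE_transpose {p q : Multiset ℕ} (hp : ∀ a ∈ p, 0 < a) (hq : ∀ a ∈ q, 0 < a)
    (hs : p.sum = q.sum) (h : domLE p q) : domLE (transpose q) (transpose p) := by
  intro m
  rw [topSum_transpose, topSum_transpose]
  rcases le_or_gt m p.sum with hm | hm
  · have t1 := head_tail_split p hm
    have t2 := head_tail_split q (hs ▸ hm)
    have t3 := tail_sCount_le hs h m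
    rw [hs] at t1 t3
    omega
  · have e1 : ∑ k ∈ Finset.Icc 1 m, sCount p k = ∑ k ∈ Finset.Icc 1 p.sum, sCount p k := by
      apply (Finset.sum_subset (Finset.Icc_subset_Icc_right (by omega)) _).symm
      intro x hx hnx
      rw [Finset.mem_Icc] at hx hnx
      exact sCount_eq_zero_of_gt (by have := maxPart_le_sum p; omega)
    have e2 : ∑ k ∈ Finset.Icc 1 m, sCount q k = ∑ k ∈ Finset.Icc 1 q.sum, sCount q k := by
      apply (Finset.sum_subset (Finset.Icc_subset_Icc_right (by omega)) _).symm
      intro x hx hnx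
      rw [Finset.mem_Icc] at hx hnx
      exact sCount_eq_zero_of_gt (by have := maxPart_le_sum q; omega)
    rw [e1, e2, sum_sCount_Icc p p.sum (fun a ha => mem_le_sum ha),
      sum_sCount_Icc q q.sum (fun a ha => mem_le_sum ha), hs]
/-! ### Parity lemmas -/

lemma sum_mod_two (p : Multiset ℕ) :
    p.sum % 2 = (p.filter (fun a => a % 2 = 1)).card % 2 := by
  induction p using Multiset.induction_on with
  | empty => simp
  | cons a s ih =>
    rw [Multiset.sum_cons, Multiset.filter_cons]
    split_ifs with h
    · rw [Multiset.card_add, Multiset.card_singleton]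
      omega
    · rw [Multiset.card_add]
      simp only [Multiset.card_zero]
      omega

lemma even_card_of_even_counts {e : Multiset ℕ} (h : ∀ a, Even (e.count a)) :
    Even (Multiset.card e) := by
  rw [← Multiset.toFinset_sum_count_eq]
  rw [Nat.even_iff, ← Nat.dvd_iff_mod_eq_zero]
  apply Finset.dvd_sum
  intro a _
  exact (h a).two_dvd

lemma symplectic_even_odd_card {c : Multiset ℕ} (hc : IsSymplectic c) (w : ℕ) :
    Even (((c.filter (fun a => w ≤ a)).filter (fun a => a % 2 = 1)).card) := by
  apply even_card_of_even_counts
  intro a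
  rw [Multiset.count_filter, Multiset.count_filter]
  split_ifs with h1 h2
  · exact hc a h1
  · exact Even.zero
  · exact Even.zero

/-- For a symplectic partition, the sum of all parts `≥ w` is even. -/
lemma symplectic_filter_sum_even {c : Multiset ℕ} (hc : IsSymplectic c) (w : ℕ) :
    (c.filter (fun a => w ≤ a)).sum % 2 = 0 := by
  rw [sum_mod_two]
  have := symplectic_even_odd_card hc w
  rw [Nat.even_iff] at this
  omega

lemma symplectic_iff_sCount (c : Multiset ℕ) :
    IsSymplectic c ↔ ∀ z, z % 2 = 1 → sCount c z % 2 = sCount c (z + 1) % 2 := by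
  constructor
  · intro h z hz
    have hs := sCount_split c z
    have he := h z hz
    rw [Nat.even_iff] at he
    omega
  · intro h a ha
    have hs := sCount_split c a
    have he := h a ha
    rw [Nat.even_iff]
    omega

/-- Even top sums of a partition whose transpose is symplectic are even. -/
lemma topSum_even_of_special {r : Multiset ℕ} (hr : ∀ a ∈ r, 0 < a)
    (hsp : IsSymplectic (transpose r)) : ∀ m, m % 2 = 0 → topSum r m % 2 = 0 := by
  have hs := (symplectic_iff_sCount (transpose r)).mp hsp
  intro m
  induction m using Nat.strong_induction_on with
  | _ m ih =>
    intro hm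
    rcases Nat.eq_zero_or_pos m with rfl | hm1
    · rw [topSum_zero]
    · obtain ⟨k, rfl⟩ : ∃ k, m = k + 1 + 1 := ⟨m - 2, by omega⟩
      have e1 := topSum_succ hr k
      have e2 := topSum_succ hr (k + 1)
      have e3 := hs (k + 1) (by omega)
      have e4 := ih k (by omega) (by omega)
      omega
/-! ### Parts-window lemmas and violations of specialness -/

lemma part_window {c : Multiset ℕ} {z k : ℕ} (hz : 1 ≤ z) (hk : 1 ≤ k)
    (h1 : sCount c (z + 1) < k) (h2 : k ≤ sCount c z) :
    sCount (transpose c) k = z := by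
  have a1 : z ≤ sCount (transpose c) k := (transpose_galois c hz hk).mpr h2
  have a2 : ¬ (z + 1 ≤ sCount (transpose c) k) := fun h => by
    have := (transpose_galois c (by omega) hk).mp h
    omega
  omega

lemma topSum_val (c : Multiset ℕ) {w : ℕ} (hw : 1 ≤ w) :
    topSum c (sCount c w) = (c.filter (fun a => w ≤ a)).sum := by
  have hFsum : ∑ i ∈ Finset.Icc 1 c.sum, sCount (c.filter (fun a => w ≤ a)) i
      = (c.filter (fun a => w ≤ a)).sum :=
    sum_sCount_Icc _ c.sum (fun a ha => mem_le_sum (Multiset.mem_of_mem_filter ha))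
  rw [topSum, ← hFsum]
  apply Finset.sum_congr rfl
  intro i hi
  rw [Finset.mem_Icc] at hi
  rcases le_or_gt i w with h | h
  · have e1 : sCount (c.filter (fun a => w ≤ a)) i = sCount c w := by
      rw [sCount, Multiset.filter_eq_self.mpr]
      · rfl
      · intro a ha
        have := Multiset.of_mem_filter ha
        omega
    rw [e1]
    exact min_eq_left (sCount_anti c h)
  · have e1 : sCount (c.filter (fun a => w ≤ a)) i = sCount c i := by
      rw [sCount, sCount, Multiset.filter_filter]
      congr 1
      apply Multiset.filter_congr
      intro a _
      constructor
      · intro ha; omega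
      · intro ha; exact ⟨ha, by omega⟩
    rw [e1]
    exact min_eq_right (sCount_anti c (by omega))

lemma topSum_window {c : Multiset ℕ} (hc : ∀ a ∈ c, 0 < a) {z : ℕ} (hz : 1 ≤ z) :
    ∀ m, sCount c (z + 1) ≤ m → m ≤ sCount c z →
    topSum c m = (c.filter (fun a => z + 1 ≤ a)).sum + z * (m - sCount c (z + 1)) := by
  intro m h1
  induction m, h1 using Nat.le_induction with
  | base =>
    intro _
    rw [Nat.sub_self, Nat.mul_zero, Nat.add_zero]
    exact topSum_val c (by omega)
  | succ m hm ih =>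
    intro h2
    rw [topSum_succ hc m, ih (by omega),
      part_window (c := c) hz (by omega) (by omega) h2]
    have e1 : m + 1 - sCount c (z + 1) = (m - sCount c (z + 1)) + 1 := by omega
    rw [e1, Nat.mul_succ]
    omega

/-- If a symplectic partition is not special, there is an odd value `z` whose column
counts `s_z, s_{z+1}` are both odd (and which occurs at least twice). -/
lemma exists_violation {c : Multiset ℕ} (hcsym : IsSymplectic c)
    (hns : ¬ IsSymplectic (transpose c)) :
    ∃ z, z % 2 = 1 ∧ sCount c z % 2 = 1 ∧ sCount c (z + 1) % 2 = 1 ∧ 2 ≤ c.count z := by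
  rw [symplectic_iff_sCount] at hns
  push_neg at hns
  obtain ⟨u, hu, hne⟩ := hns
  have hanti : sCount (transpose c) (u + 1) ≤ sCount (transpose c) u :=
    sCount_anti _ (by omega)
  rcases Nat.lt_or_ge (sCount (transpose c) u % 2) 1 with hpu | hpu
  · -- `part_u` even, `part_{u+1}` odd ; take `z := part_{u+1}`
    set z := sCount (transpose c) (u + 1) with hzdef
    have hz : z % 2 = 1 := by omega
    have hlt : z < sCount (transpose c) u := by omega
    have e1 : u + 1 ≤ sCount c z :=
      (transpose_galois c (by omega) (by omega)).mp (le_refl z)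
    have e2 : u ≤ sCount c (z + 1) :=
      (transpose_galois c (by omega) (by omega)).mp (by omega)
    have e3 : ¬ (u + 1 ≤ sCount c (z + 1)) := fun h => by
      have := (transpose_galois c (by omega) (by omega)).mpr h
      omega
    have e4 : sCount c (z + 1) = u := by omega
    have hsplit := sCount_split c z
    have hev := hcsym z hz
    rw [Nat.even_iff] at hev
    exact ⟨z, hz, by omega, by omega, by omega⟩
  · -- `part_u` odd ; take `z := part_u`
    set z := sCount (transpose c) u with hzdef
    have hz : z % 2 = 1 := by omega
    have hlt : sCount (transpose c) (u + 1) < z := by omega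
    have e1 : u ≤ sCount c z :=
      (transpose_galois c (by omega) (by omega)).mp (le_refl z)
    have e2 : ¬ (u + 1 ≤ sCount c z) := fun h => by
      have := (transpose_galois c (by omega) (by omega)).mpr h
      omega
    have e3 : ¬ (u ≤ sCount c (z + 1)) := fun h => by
      have := (transpose_galois c (by omega) (by omega)).mpr h
      omega
    have hsplit := sCount_split c z
    have hev := hcsym z hz
    rw [Nat.even_iff] at hev
    exact ⟨z, hz, by omega, by omega, by omega⟩
/-! ### The surgery argument: the Sp-collapse of a co-symplectic partition is special -/

lemma surgery_contra {r c : Multiset ℕ} (hr : ∀ a ∈ r, 0 < a)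
    (hrsp : IsSymplectic (transpose r))
    (hcpos : ∀ a ∈ c, 0 < a) (hcsum : c.sum = r.sum) (hcsym : IsSymplectic c)
    (hdom : domLE c r)
    (hmax : ∀ c', IsPartitionOf c' r.sum → IsSymplectic c' → domLE c' r → domLE c' c)
    {z : ℕ} (hz : z % 2 = 1) (hsz : sCount c z % 2 = 1) (hsz1 : sCount c (z + 1) % 2 = 1)
    (hcnt : 2 ≤ c.count z) : False := by
  have hz1 : 1 ≤ z := by omega
  have hsplit := sCount_split c z
  have hgap : sCount c (z + 1) + 2 ≤ sCount c z := by omega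
  have hz_mem : z ∈ c := by rw [← Multiset.count_pos]; omega
  have hz_mem2 : z ∈ c.erase z := by
    rw [← Multiset.count_pos, Multiset.count_erase_self]; omega
  have hdec : z ::ₘ z ::ₘ (c.erase z).erase z = c := by
    rw [Multiset.cons_erase hz_mem2, Multiset.cons_erase hz_mem]
  have hd_sum : ((c.erase z).erase z).sum + z + z = c.sum := by
    have h := congrArg Multiset.sum hdec
    simp only [Multiset.sum_cons] at h
    omega
  set c' := addPart (z - 1) ((z + 1) ::ₘ (c.erase z).erase z) with hc'
  -- sum of c'
  have hc'sum : c'.sum = c.sum := by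
    rw [hc', addPart]
    split_ifs with h0
    · simp only [Multiset.sum_cons]
      omega
    · simp only [Multiset.sum_cons]
      omega
  -- positivity of c'
  have hc'pos : ∀ a ∈ c', 0 < a := by
    intro a ha
    rw [hc', addPart] at ha
    split_ifs at ha with h0
    · rcases Multiset.mem_cons.mp ha with rfl | ha'
      · omega
      · exact hcpos a (Multiset.mem_of_mem_erase (Multiset.mem_of_mem_erase ha'))
    · rcases Multiset.mem_cons.mp ha with rfl | ha'
      · omega
      · rcases Multiset.mem_cons.mp ha' with rfl | ha''
        · omega
        · exact hcpos a (Multiset.mem_of_mem_erase (Multiset.mem_of_mem_erase ha''))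
  -- c' is symplectic
  have hc'sym : IsSymplectic c' := by
    intro a ha
    have hane : a ≠ z + 1 := by omega
    have hane2 : a ≠ z - 1 := by omega
    have hcd : c.count a = (if a = z then 2 else 0) + ((c.erase z).erase z).count a := by
      conv_lhs => rw [← hdec]
      rw [Multiset.count_cons, Multiset.count_cons]
      split_ifs <;> omega
    have hcc' : c'.count a = ((c.erase z).erase z).count a := by
      rw [hc', addPart]
      split_ifs with h0
      · rw [Multiset.count_cons]
        split_ifs <;> omega
      · rw [Multiset.count_cons, Multiset.count_cons]
        split_ifs <;> omega
    have hev := hcsym a ha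
    rw [Nat.even_iff] at hev ⊢
    rw [hcc']
    split_ifs at hcd <;> omega
  -- sCount relation between c' and c
  have hsc : ∀ i, 1 ≤ i →
      sCount c' i + (if i = z then 1 else 0) = sCount c i + (if i = z + 1 then 1 else 0) := by
    intro i hi
    have h1 : sCount c i = (if i ≤ z then 2 else 0) + sCount ((c.erase z).erase z) i := by
      conv_lhs => rw [← hdec]
      rw [sCount_cons, sCount_cons]
      split_ifs <;> omega
    have h2 : sCount c' i = (if i ≤ z + 1 then 1 else 0) + (if i ≤ z - 1 ∧ ¬ (z - 1 = 0) then 1 else 0)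
        + sCount ((c.erase z).erase z) i := by
      rw [hc', addPart]
      by_cases h0 : z - 1 = 0
      · rw [if_pos h0, sCount_cons]
        split_ifs <;> omega
      · rw [if_neg h0, sCount_cons, sCount_cons]
        split_ifs <;> omega
    rw [h1, h2]
    split_ifs <;> omega
  have e1' : sCount c' z + 1 = sCount c z := by
    have h := hsc z (by omega)
    split_ifs at h <;> omega
  have e2' : sCount c' (z + 1) = sCount c (z + 1) + 1 := by
    have h := hsc (z + 1) (by omega)
    split_ifs at h <;> omega
  -- topSum relation
  have htop : ∀ m, topSum c' m + min m (sCount c z) + min m (sCount c (z + 1))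
      = topSum c m + min m (sCount c z - 1) + min m (sCount c (z + 1) + 1) := by
    intro m
    have hBc' : topSum c' m = ∑ i ∈ Finset.Icc 1 c.sum, min m (sCount c' i) := by
      rw [topSum, hc'sum]
    have hz_in : z ∈ Finset.Icc 1 c.sum := by
      rw [Finset.mem_Icc]; omega
    have hz1_in : z + 1 ∈ (Finset.Icc 1 c.sum).erase z := by
      rw [Finset.mem_erase, Finset.mem_Icc]
      constructor
      · omega
      · omega
    have hsplitSum : ∀ f : ℕ → ℕ, ∑ i ∈ Finset.Icc 1 c.sum, f i
        = (∑ i ∈ ((Finset.Icc 1 c.sum).erase z).erase (z + 1), f i + f (z + 1)) + f z := by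
      intro f
      rw [Finset.sum_erase_add _ _ hz1_in, Finset.sum_erase_add _ _ hz_in]
    rw [hBc', topSum, hsplitSum (fun i => min m (sCount c' i)),
      hsplitSum (fun i => min m (sCount c i))]
    have hA_eq : ∀ i ∈ ((Finset.Icc 1 c.sum).erase z).erase (z + 1),
        min m (sCount c' i) = min m (sCount c i) := by
      intro i hiA
      rw [Finset.mem_erase, Finset.mem_erase, Finset.mem_Icc] at hiA
      obtain ⟨hne1, hne2, hi1, _⟩ := hiA
      have h := hsc i hi1
      rw [if_neg hne2, if_neg hne1] at h
      rw [show sCount c' i = sCount c i by omega]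
    rw [Finset.sum_congr rfl hA_eq]
    have := e1'
    have := e2'
    omega
  -- strict dominance inside the window
  have hstrict : ∀ m, sCount c (z + 1) < m → m < sCount c z → topSum c m < topSum r m := by
    intro m hm1 hm2
    rcases Nat.lt_or_ge (topSum c m) (topSum r m) with h | h
    · exact h
    exfalso
    have heq : topSum c m = topSum r m := le_antisymm (hdom m) h
    have hm0 : 1 ≤ m := by omega
    have hpc1 : sCount (transpose c) m = z := part_window hz1 hm0 (by omega) (by omega)
    have hpc2 : sCount (transpose c) (m + 1) = z := part_window hz1 (by omega) (by omega) (by omega)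
    obtain ⟨m', rfl⟩ : ∃ m', m = m' + 1 := ⟨m - 1, by omega⟩
    have tc1 := topSum_succ hcpos m'
    have tr1 := topSum_succ hr m'
    have tc2 := topSum_succ hcpos (m' + 1)
    have tr2 := topSum_succ hr (m' + 1)
    have hd1 := hdom m'
    have hd3 := hdom (m' + 1 + 1)
    have hrpart_anti : sCount (transpose r) (m' + 1 + 1) ≤ sCount (transpose r) (m' + 1) :=
      sCount_anti _ (by omega)
    have hge : z ≤ sCount (transpose r) (m' + 1 + 1) := by omega
    have hle : sCount (transpose r) (m' + 1) ≤ z := by omega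
    have hr_eq : sCount (transpose r) (m' + 1) = z := by omega
    have hwin := topSum_window hcpos hz1 (m' + 1) (by omega) (by omega)
    have hfe := symplectic_filter_sum_even hcsym (z + 1)
    have hmul : (z * ((m' + 1) - sCount c (z + 1))) % 2 = ((m' + 1) - sCount c (z + 1)) % 2 := by
      rw [Nat.mul_mod, hz, one_mul]
      omega
    rcases Nat.even_or_odd (m' + 1) with he | ho
    · have hre := topSum_even_of_special hr hrsp (m' + 1) (Nat.even_iff.mp he)
      rw [Nat.even_iff] at he
      omega
    · have hom : m' % 2 = 0 := by
        rw [Nat.odd_iff] at ho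
        omega
      have hpar_r : topSum r m' % 2 = 0 := topSum_even_of_special hr hrsp m' hom
      rw [Nat.odd_iff] at ho
      omega
  -- c' is dominated by r
  have hc'dom : domLE c' r := by
    intro m
    have ht := htop m
    by_cases hwin : sCount c (z + 1) < m ∧ m < sCount c z
    · have := hstrict m hwin.1 hwin.2
      omega
    · have := hdom m
      push_neg at hwin
      omega
  -- contradiction with maximality
  have hmaxc' := hmax c' ⟨hc'pos, by rw [hc'sum, hcsum]⟩ hc'sym hc'dom
  have hcon := hmaxc' (sCount c (z + 1) + 1)
  have ht := htop (sCount c (z + 1) + 1)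
  omega

/-- **Key lemma**: the `Sp`-collapse of a partition whose transpose is symplectic is special. -/
lemma spCollapse_special {r c : Multiset ℕ} (hr : ∀ a ∈ r, 0 < a)
    (hrsp : IsSymplectic (transpose r)) (hcol : IsSpCollapse r c) :
    IsSymplectic (transpose c) := by
  obtain ⟨⟨hcpos, hcsum⟩, hcsym, hdom, hmax⟩ := hcol
  by_contra hns
  obtain ⟨z, hz, hsz, hsz1, hcnt⟩ := exists_violation hcsym hns
  exact surgery_contra hr hrsp hcpos hcsum hcsym hdom hmax hz hsz hsz1 hcnt
/-! ### Arithmetic helpers for the main theorem -/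

lemma filter_pos_sum (s : Multiset ℕ) : (s.filter (fun x => 0 < x)).sum = s.sum := by
  induction s using Multiset.induction_on with
  | empty => simp
  | cons a t ih =>
    rw [Multiset.filter_cons, Multiset.sum_cons, Multiset.sum_add, ih]
    split_ifs with h
    · rw [Multiset.sum_singleton]
    · simp only [Multiset.sum_zero]
      omega

lemma half_sum (p : Multiset ℕ) :
    2 * (p.map (fun b => b / 2)).sum + (p.filter (fun a => a % 2 = 1)).card = p.sum := by
  induction p using Multiset.induction_on with
  | empty => simp
  | cons a t ih =>
    rw [Multiset.map_cons, Multiset.sum_cons, Multiset.sum_cons, Multiset.filter_cons]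
    split_ifs with h
    · rw [Multiset.card_add, Multiset.card_singleton]
      omega
    · rw [Multiset.card_add, Multiset.card_zero]
      omega

lemma addPart_sum (m : ℕ) (q : Multiset ℕ) : (addPart m q).sum = m + q.sum := by
  rw [addPart]
  split_ifs with h
  · omega
  · rw [Multiset.sum_cons]

lemma addPart_pos {m : ℕ} {q : Multiset ℕ} (hq : ∀ a ∈ q, 0 < a) :
    ∀ a ∈ addPart m q, 0 < a := by
  intro a ha
  rw [addPart] at ha
  split_ifs at ha with h
  · exact hq a ha
  · rcases Multiset.mem_cons.mp ha with rfl | ha'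
    · omega
    · exact hq a ha'

lemma addPart_count (m : ℕ) (q : Multiset ℕ) (a : ℕ) (hne : a ≠ m) :
    (addPart m q).count a = q.count a := by
  rw [addPart]
  split_ifs with h
  · rfl
  · rw [Multiset.count_cons]
    split_ifs <;> omega

lemma pMinus_sum {p : Multiset ℕ} (hpos : ∀ a ∈ p, 0 < a) (hne : p ≠ 0) :
    (pMinus p).sum + 1 = p.sum := by
  have hmem : minPart p ∈ p := by
    rw [minPart]
    have hnon : {a : ℕ | a ∈ p}.Nonempty := by
      obtain ⟨a, ha⟩ := Multiset.exists_mem_of_ne_zero hne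
      exact ⟨a, ha⟩
    exact Nat.sInf_mem hnon
  have hmin_pos : 0 < minPart p := hpos _ hmem
  have hsum : minPart p + (p.erase (minPart p)).sum = p.sum := by
    have h := congrArg Multiset.sum (Multiset.cons_erase hmem)
    rw [Multiset.sum_cons] at h
    exact h
  rw [pMinus]
  split_ifs with h
  · omega
  · rw [Multiset.sum_cons]
    omega

lemma pMinus_pos {p : Multiset ℕ} (hpos : ∀ a ∈ p, 0 < a) (hne : p ≠ 0) :
    ∀ a ∈ pMinus p, 0 < a := by
  have hmem : minPart p ∈ p := by
    rw [minPart]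
    have hnon : {a : ℕ | a ∈ p}.Nonempty := by
      obtain ⟨a, ha⟩ := Multiset.exists_mem_of_ne_zero hne
      exact ⟨a, ha⟩
    exact Nat.sInf_mem hnon
  intro a ha
  rw [pMinus] at ha
  split_ifs at ha with h
  · exact hpos a (Multiset.mem_of_mem_erase ha)
  · rcases Multiset.mem_cons.mp ha with rfl | ha'
    · omega
    · exact hpos a (Multiset.mem_of_mem_erase ha')

/-- for an orthogonal partition `p` of `2n+1`, the number of odd parts is odd,
`2n* = (Σ_{b_i odd} a_i) − 1`, `P = [p₁ p₁ (2n*)]` is a symplectic partition of `2n`, and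
`P^{Sp_{2n}} = ((p^-)_{Sp_{2n}})^t` iff `(P^t)_{Sp_{2n}} = (p^-)_{Sp_{2n}}`. -/
theorem expansion_iff_collapse_Sp (n : ℕ) (p : Multiset ℕ)
    (hp : IsPartitionOf p (2 * n + 1)) (horth : IsOrthogonal p) :
    Odd (oddMult p) ∧ 2 * nStar p = oddMult p - 1 ∧
      IsPartitionOf (addPart (2 * nStar p) (pOne p + pOne p)) (2 * n) ∧
      IsSymplectic (addPart (2 * nStar p) (pOne p + pOne p)) ∧
      ∀ e c₁ c₂ : Multiset ℕ,
        IsSpExpansion (addPart (2 * nStar p) (pOne p + pOne p)) e →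
        IsSpCollapse (pMinus p) c₁ →
        IsSpCollapse (transpose (addPart (2 * nStar p) (pOne p + pOne p))) c₂ →
        (e = transpose c₁ ↔ c₂ = c₁) := by
  obtain ⟨hppos, hpsum⟩ := hp
  -- (1) the number of odd parts is odd
  have hparity := sum_mod_two p
  have hodd : Odd (oddMult p) := by
    rw [Nat.odd_iff, oddMult]
    omega
  have hoddm : oddMult p % 2 = 1 := Nat.odd_iff.mp hodd
  -- (2)
  have hstar : 2 * nStar p = oddMult p - 1 := by
    rw [nStar]
    omega
  -- sums
  have hhalf := half_sum p
  have hp1sum : (pOne p).sum = (p.map (fun b => b / 2)).sum := by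
    rw [pOne, transpose_sum, filter_pos_sum]
  have hPsum : (addPart (2 * nStar p) (pOne p + pOne p)).sum = 2 * n := by
    rw [addPart_sum, Multiset.sum_add, hp1sum, hstar, oddMult]
    omega
  have hPpos : ∀ a ∈ addPart (2 * nStar p) (pOne p + pOne p), 0 < a := by
    apply addPart_pos
    intro a ha
    rcases Multiset.mem_add.mp ha with h | h
    · exact transpose_pos _ a h
    · exact transpose_pos _ a h
  have hP : IsPartitionOf (addPart (2 * nStar p) (pOne p + pOne p)) (2 * n) := ⟨hPpos, hPsum⟩
  -- (4) symplectic
  have hPsym : IsSymplectic (addPart (2 * nStar p) (pOne p + pOne p)) := by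
    intro a ha
    have hne : a ≠ 2 * nStar p := by omega
    rw [addPart_count _ _ _ hne, Multiset.count_add]
    exact ⟨(pOne p).count a, by omega⟩
  refine ⟨hodd, hstar, hP, hPsym, ?_⟩
  -- (5) the equivalence
  intro e c₁ c₂ hexp hcol1 hcol2
  set P := addPart (2 * nStar p) (pOne p + pOne p) with hPdef
  obtain ⟨⟨hepos, hesum⟩, hesym, hespt, hedom, hemin⟩ := hexp
  obtain ⟨⟨hc1pos, hc1sum⟩, hc1sym, hc1dom, hc1max⟩ := hcol1
  obtain ⟨⟨hc2pos, hc2sum⟩, hc2sym, hc2dom, hc2max⟩ := hcol2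
  have hrpos : ∀ a ∈ transpose P, 0 < a := transpose_pos P
  have hrsum : (transpose P).sum = 2 * n := by rw [transpose_sum, hPsum]
  have htrr : transpose (transpose P) = P := transpose_transpose hPpos
  have hrsp : IsSymplectic (transpose (transpose P)) := by rw [htrr]; exact hPsym
  -- sums of the various partitions
  have hpne : p ≠ 0 := by
    intro h0
    rw [h0] at hpsum
    simp at hpsum
  have hpminus_sum : (pMinus p).sum = 2 * n := by
    have := pMinus_sum hppos hpne
    omega
  have hc1sum' : c₁.sum = 2 * n := by rw [hc1sum, hpminus_sum]
  have hc2sum' : c₂.sum = 2 * n := by rw [hc2sum, hrsum]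
  have hesum' : e.sum = 2 * n := by rw [hesum, hPsum]
  -- the collapse of `transpose P` is special
  have hc2sp : IsSymplectic (transpose c₂) :=
    spCollapse_special hrpos hrsp ⟨⟨hc2pos, hc2sum⟩, hc2sym, hc2dom, hc2max⟩
  constructor
  · -- `e = transpose c₁ → c₂ = c₁`
    intro he
    -- c₁ ≤ transpose P
    have hPe : domLE P (transpose c₁) := by rw [← he]; exact hedom
    have hc1r : domLE c₁ (transpose P) := by
      have h := domLE_transpose hPpos (transpose_pos c₁)
        (by rw [transpose_sum, hc1sum', hPsum]) hPe
      rwa [transpose_transpose hc1pos] at h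
    have hle12 : domLE c₁ c₂ := hc2max c₁ ⟨hc1pos, by rw [hc1sum', hrsum]⟩ hc1sym hc1r
    -- e ≤ transpose c₂ by minimality
    have hPc2 : domLE P (transpose c₂) := by
      have h := domLE_transpose hc2pos hrpos hc2sum hc2dom
      rwa [htrr] at h
    have hee : domLE e (transpose c₂) :=
      hemin (transpose c₂) ⟨transpose_pos c₂, by rw [transpose_sum, hc2sum', hPsum]⟩
        hc2sp (by rw [transpose_transpose hc2pos]; exact hc2sym) hPc2
    rw [he] at hee
    have hle21 : domLE c₂ c₁ := by
      have h := domLE_transpose (transpose_pos c₁) (transpose_pos c₂)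
        (by rw [transpose_sum, transpose_sum, hc1sum', hc2sum']) hee
      rwa [transpose_transpose hc2pos, transpose_transpose hc1pos] at h
    exact domLE_antisymm hc2pos hc1pos hle21 hle12
  · -- `c₂ = c₁ → e = transpose c₁`
    intro hc
    have hc1sp : IsSymplectic (transpose c₁) := by rw [← hc]; exact hc2sp
    have hc1r : domLE c₁ (transpose P) := by rw [← hc]; exact hc2dom
    have hPc1 : domLE P (transpose c₁) := by
      have h := domLE_transpose hc1pos hrpos (by rw [hc1sum', hrsum]) hc1r
      rwa [htrr] at h
    have he1 : domLE e (transpose c₁) :=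
      hemin (transpose c₁) ⟨transpose_pos c₁, by rw [transpose_sum, hc1sum', hPsum]⟩
        hc1sp (by rw [transpose_transpose hc1pos]; exact hc1sym) hPc1
    have hte : domLE (transpose e) (transpose P) :=
      domLE_transpose hPpos hepos (by rw [hesum]) hedom
    have hte2 : domLE (transpose e) c₁ := by
      rw [← hc]
      exact hc2max (transpose e) ⟨transpose_pos e, by rw [transpose_sum, hesum', hrsum]⟩
        hespt hte
    have he2 : domLE (transpose c₁) e := by
      have h := domLE_transpose (transpose_pos e) hc1pos
        (by rw [transpose_sum, hesum', hc1sum']) hte2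
      rwa [transpose_transpose hepos] at h
    exact domLE_antisymm hepos (transpose_pos c₁) he1 he2

end JiangWF
end
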